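/- arXiv:2207.08039 — 4 statements merged into one kernel-verified Lean document; each statement's English description precedes it below -/
import Mathlib

section
/- Let Ω ⊆ ℝⁿ (n ≥ 2) be a bounded domain, let 𝒮 be a valid subdivision for Ω, and let z₀ and z be two points of ⋃_{S∈𝒮} S. Let S₀, S₁, …, S_j ∈ 𝒮 be a sequence of sets such that z₀ ∈ S₀, z ∈ S_j, and ∂S_i ∩ ∂S_{i+1} ≠ ∅ for 0 ≤ i < j. Then k(z, z₀; Ω) ≤ 2 Σ_{i=0}^{j} d(S_i)/δ(S_i). -/
open MeasureTheory Metric Set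
open scoped ENNReal

/-- The quasihyperbolic distance `k(z, z₀; Ω)`: the infimum, over all Lipschitz curves
`γ : [0,1] → Ω` joining `z` to `z₀`, of `∫ ‖γ'(t)‖ / d(γ(t), ∂Ω) dt`. -/
noncomputable def qhDist {n : ℕ} (Ω : Set (EuclideanSpace ℝ (Fin n)))
    (z z₀ : EuclideanSpace ℝ (Fin n)) : ℝ :=
  sInf {L : ℝ | ∃ γ : ℝ → EuclideanSpace ℝ (Fin n),
    (∃ K : NNReal, LipschitzWith K γ) ∧ γ 0 = z ∧ γ 1 = z₀ ∧
    (∀ t ∈ Set.Icc (0:ℝ) 1, γ t ∈ Ω) ∧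
    L = ∫ t in (0:ℝ)..1, ‖deriv γ t‖ / Metric.infDist (γ t) (frontier Ω)}

/-- The distance between two sets (used for the distance `δ(S)` from `S` to `∂Ω`). -/
noncomputable def setDist {n : ℕ} (A B : Set (EuclideanSpace ℝ (Fin n))) : ℝ :=
  sInf {d : ℝ | ∃ a ∈ A, ∃ b ∈ B, d = dist a b}

/-- `𝒮` is a valid subdivision of `Ω`: closed star-shaped subsets of `Ω`, pairwise
intersecting in measure zero, covering `Ω` up to measure zero, and any two points of
`⋃₀ 𝒮` are joined by a finite chain of sets of `𝒮` with consecutively touching boundaries. -/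
def IsValidSubdivision {n : ℕ} (Ω : Set (EuclideanSpace ℝ (Fin n)))
    (𝒮 : Set (Set (EuclideanSpace ℝ (Fin n)))) : Prop :=
  (∀ S ∈ 𝒮, IsClosed S ∧ S ⊆ Ω ∧ ∃ p ∈ S, StarConvex ℝ p S) ∧
  (∀ S ∈ 𝒮, ∀ T ∈ 𝒮, S ≠ T → volume (S ∩ T) = 0) ∧
  volume (Ω \ ⋃₀ 𝒮) = 0 ∧
  ∀ z₀ ∈ ⋃₀ 𝒮, ∀ z ∈ ⋃₀ 𝒮, ∃ (j : ℕ) (c : ℕ → Set (EuclideanSpace ℝ (Fin n))),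
    (∀ i ≤ j, c i ∈ 𝒮) ∧ z₀ ∈ c 0 ∧ z ∈ c j ∧
    ∀ i < j, (frontier (c i) ∩ frontier (c (i+1))).Nonempty


noncomputable section QHAuxSection
open Filter Bornology
variable {n : ℕ}




def clamp (s : ℝ) : ℝ := min (max s 0) 1

lemma clamp_mem (s : ℝ) : clamp s ∈ Set.Icc (0:ℝ) 1 := by
  constructor
  · exact le_min (le_max_right _ _) zero_le_one
  · exact min_le_right _ _

lemma clamp_of_nonpos {s : ℝ} (h : s ≤ 0) : clamp s = 0 := by
  simp [clamp, max_eq_right h, min_eq_left (zero_le_one)]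

lemma clamp_of_one_le {s : ℝ} (h : 1 ≤ s) : clamp s = 1 := by
  have : max s 0 = s := max_eq_left (le_trans zero_le_one h)
  simp [clamp, this, min_eq_right h]

lemma clamp_of_mem {s : ℝ} (h0 : 0 ≤ s) (h1 : s ≤ 1) : clamp s = s := by
  simp [clamp, max_eq_left h0, min_eq_left h1]

lemma clamp_lipschitz (a b : ℝ) : |clamp a - clamp b| ≤ |a - b| := by
  have h1 : |min (max a 0) 1 - min (max b 0) 1| ≤ max |max a 0 - max b 0| |(1:ℝ) - 1| :=
    abs_min_sub_min_le_max _ _ _ _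
  have h2 : |max a 0 - max b 0| ≤ |a - b| := abs_max_sub_max_le_abs _ _ _
  calc |clamp a - clamp b| ≤ max |max a 0 - max b 0| |(1:ℝ)-1| := h1
    _ ≤ |a - b| := by
        rw [sub_self, abs_zero]
        exact max_le h2 (abs_nonneg _)





variable {n : ℕ}

def poly (m : ℕ) (q : ℕ → EuclideanSpace ℝ (Fin n)) (t : ℝ) : EuclideanSpace ℝ (Fin n) :=
  q 0 + ∑ k ∈ Finset.range m, clamp ((m:ℝ)*t - k) • (q (k+1) - q k)

lemma poly_zero (m : ℕ) (q : ℕ → EuclideanSpace ℝ (Fin n)) : poly m q 0 = q 0 := by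
  have h : ∀ k ∈ Finset.range m, clamp ((m:ℝ)*0 - k) • (q (k+1) - q k) = 0 := by
    intro k _
    rw [clamp_of_nonpos (by simp), zero_smul]
  rw [poly, Finset.sum_congr rfl h]
  simp

lemma poly_one (m : ℕ) (q : ℕ → EuclideanSpace ℝ (Fin n)) : poly m q 1 = q m := by
  have h : ∀ k ∈ Finset.range m, clamp ((m:ℝ)*1 - k) • (q (k+1) - q k) = q (k+1) - q k := by
    intro k hk
    rw [Finset.mem_range] at hk
    rw [clamp_of_one_le (by
      rw [mul_one]
      have : (k:ℝ) + 1 ≤ m := by exact_mod_cast hk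
      linarith), one_smul]
  rw [poly, Finset.sum_congr rfl h, Finset.sum_range_sub]
  abel

lemma poly_eq_on {m k : ℕ} (q : ℕ → EuclideanSpace ℝ (Fin n)) (hk : k < m) {t : ℝ}
    (h1 : (k:ℝ)/m ≤ t) (h2 : t ≤ ((k:ℝ)+1)/m) :
    poly m q t = q k + ((m:ℝ)*t - k) • (q (k+1) - q k) := by
  have hm : (0:ℝ) < m := by exact_mod_cast Nat.lt_of_le_of_lt (Nat.zero_le k) hk
  have hkm : (k:ℝ) ≤ (m:ℝ)*t := by
    rw [div_le_iff₀ hm] at h1; linarith [h1]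
  have hkm' : (m:ℝ)*t ≤ (k:ℝ)+1 := by
    rw [le_div_iff₀ hm] at h2; linarith [h2]
  have hsplit : ∑ i ∈ Finset.range m, clamp ((m:ℝ)*t - i) • (q (i+1) - q i)
      = ∑ i ∈ Finset.range (k+1), clamp ((m:ℝ)*t - i) • (q (i+1) - q i)
        + ∑ i ∈ Finset.Ico (k+1) m, clamp ((m:ℝ)*t - i) • (q (i+1) - q i) := by
    rw [Finset.range_eq_Ico,
      ← Finset.sum_Ico_consecutive _ (Nat.zero_le (k+1)) (Nat.succ_le_of_lt hk), Finset.range_eq_Ico]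
  have htail : ∑ i ∈ Finset.Ico (k+1) m, clamp ((m:ℝ)*t - i) • (q (i+1) - q i) = 0 := by
    apply Finset.sum_eq_zero
    intro i hi
    rw [Finset.mem_Ico] at hi
    have : (m:ℝ)*t - i ≤ 0 := by
      have : ((k:ℝ)+1) ≤ i := by exact_mod_cast hi.1
      linarith
    rw [clamp_of_nonpos this, zero_smul]
  have hhead : ∑ i ∈ Finset.range k, clamp ((m:ℝ)*t - i) • (q (i+1) - q i)
      = q k - q 0 := by
    rw [← Finset.sum_range_sub q k]
    apply Finset.sum_congr rfl
    intro i hi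
    rw [Finset.mem_range] at hi
    have : (1:ℝ) ≤ (m:ℝ)*t - i := by
      have : (i:ℝ) + 1 ≤ k := by exact_mod_cast hi
      linarith
    rw [clamp_of_one_le this, one_smul]
  rw [poly, hsplit, htail, Finset.sum_range_succ, hhead,
    clamp_of_mem (by linarith) (by linarith)]
  abel

lemma poly_lipschitz (m : ℕ) (q : ℕ → EuclideanSpace ℝ (Fin n)) :
    ∃ K : NNReal, LipschitzWith K (poly m q) := by
  set C : ℝ := ∑ k ∈ Finset.range m, (m:ℝ) * ‖q (k+1) - q k‖ with hC
  have hC0 : 0 ≤ C := Finset.sum_nonneg fun k _ => by positivity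
  refine ⟨C.toNNReal, LipschitzWith.of_dist_le_mul fun s t => ?_⟩
  rw [Real.coe_toNNReal _ hC0, dist_eq_norm]
  have hd : poly m q s - poly m q t
      = ∑ k ∈ Finset.range m,
        (clamp ((m:ℝ)*s - k) - clamp ((m:ℝ)*t - k)) • (q (k+1) - q k) := by
    rw [poly, poly, add_sub_add_left_eq_sub, ← Finset.sum_sub_distrib]
    apply Finset.sum_congr rfl
    intro k _
    rw [sub_smul]
  rw [hd]
  calc ‖∑ k ∈ Finset.range m,
        (clamp ((m:ℝ)*s - k) - clamp ((m:ℝ)*t - k)) • (q (k+1) - q k)‖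
      ≤ ∑ k ∈ Finset.range m,
        ‖(clamp ((m:ℝ)*s - k) - clamp ((m:ℝ)*t - k)) • (q (k+1) - q k)‖ :=
        norm_sum_le _ _
    _ ≤ ∑ k ∈ Finset.range m, ((m:ℝ) * ‖q (k+1) - q k‖) * dist s t := by
        apply Finset.sum_le_sum
        intro k _
        rw [norm_smul, Real.norm_eq_abs]
        have h1 : |clamp ((m:ℝ)*s - k) - clamp ((m:ℝ)*t - k)| ≤ |(m:ℝ)*s - (m:ℝ)*t| := by
          have := clamp_lipschitz ((m:ℝ)*s - k) ((m:ℝ)*t - k)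
          simpa using this
        have h2 : |(m:ℝ)*s - (m:ℝ)*t| = (m:ℝ) * dist s t := by
          rw [Real.dist_eq, ← mul_sub, abs_mul, abs_of_nonneg (Nat.cast_nonneg m)]
        calc |clamp ((m:ℝ)*s - k) - clamp ((m:ℝ)*t - k)| * ‖q (k+1) - q k‖
            ≤ ((m:ℝ) * dist s t) * ‖q (k+1) - q k‖ := by
              apply mul_le_mul_of_nonneg_right _ (norm_nonneg _)
              rw [← h2]; exact h1
          _ = ((m:ℝ) * ‖q (k+1) - q k‖) * dist s t := by ring
    _ = C * dist s t := by rw [hC, Finset.sum_mul]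

lemma poly_mem_segment {m k : ℕ} (q : ℕ → EuclideanSpace ℝ (Fin n)) (hk : k < m) {t : ℝ}
    (h1 : (k:ℝ)/m ≤ t) (h2 : t ≤ ((k:ℝ)+1)/m) :
    poly m q t ∈ segment ℝ (q k) (q (k+1)) := by
  have hm : (0:ℝ) < m := by exact_mod_cast Nat.lt_of_le_of_lt (Nat.zero_le k) hk
  rw [poly_eq_on q hk h1 h2, segment_eq_image']
  refine ⟨(m:ℝ)*t - k, ⟨?_, ?_⟩, rfl⟩
  · rw [div_le_iff₀ hm] at h1; linarith
  · rw [le_div_iff₀ hm] at h2; linarith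

lemma poly_deriv {m k : ℕ} (q : ℕ → EuclideanSpace ℝ (Fin n)) (hk : k < m) {t : ℝ}
    (ht : t ∈ Set.Ioo ((k:ℝ)/m) (((k:ℝ)+1)/m)) :
    deriv (poly m q) t = (m:ℝ) • (q (k+1) - q k) := by
  set φ : ℝ → EuclideanSpace ℝ (Fin n) :=
    fun s => q k + ((m:ℝ)*s - k) • (q (k+1) - q k) with hφ
  have heq : poly m q =ᶠ[nhds t] φ := by
    filter_upwards [isOpen_Ioo.mem_nhds ht] with s hs
    exact poly_eq_on q hk hs.1.le hs.2.le
  rw [heq.deriv_eq]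
  have hlin : HasDerivAt (fun s : ℝ => (m:ℝ)*s - (k:ℝ)) (m:ℝ) t := by
    simpa using ((hasDerivAt_id t).const_mul (m:ℝ)).sub_const (k:ℝ)
  exact ((hlin.smul_const (q (k+1) - q k)).const_add (q k)).deriv



namespace QHAux
variable {n : ℕ}

lemma frontier_nonempty {n : ℕ} (Ω : Set (EuclideanSpace ℝ (Fin n))) (hn : 2 ≤ n)
    (hne : Ω.Nonempty) (hbd : IsBounded Ω) : (frontier Ω).Nonempty := by
  by_contra h
  rw [Set.not_nonempty_iff_eq_empty] at h
  have hclopen : IsClopen Ω := isClopen_iff_frontier_eq_empty.mpr h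
  have huniv : Ω = Set.univ := hclopen.eq_univ hne
  haveI : Nonempty (Fin n) := ⟨⟨0, by omega⟩⟩
  have hnt : Nontrivial (EuclideanSpace ℝ (Fin n)) := inferInstance
  have hun : ¬ IsBounded (Set.univ : Set (EuclideanSpace ℝ (Fin n))) :=
    NormedSpace.unbounded_univ ℝ _
  exact hun (huniv ▸ hbd)

lemma setDist_le_infDist {n : ℕ} {S F : Set (EuclideanSpace ℝ (Fin n))}
    (hF : F.Nonempty) {x : EuclideanSpace ℝ (Fin n)} (hx : x ∈ S) :
    setDist S F ≤ Metric.infDist x F := by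
  by_contra hlt
  push_neg at hlt
  obtain ⟨y, hy, hxy⟩ := (Metric.infDist_lt_iff hF).mp hlt
  have hmem : dist x y ∈ {d : ℝ | ∃ a ∈ S, ∃ b ∈ F, d = dist a b} := ⟨x, hx, y, hy, rfl⟩
  have hbdd : BddBelow {d : ℝ | ∃ a ∈ S, ∃ b ∈ F, d = dist a b} := by
    refine ⟨0, ?_⟩
    rintro d ⟨a, _, b, _, rfl⟩
    exact dist_nonneg
  have h2 : setDist S F ≤ dist x y := csInf_le hbdd hmem
  linarith

lemma setDist_pos {n : ℕ} {Ω S : Set (EuclideanSpace ℝ (Fin n))} (hΩop : IsOpen Ω)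
    (hS : IsCompact S) (hSne : S.Nonempty) (hSΩ : S ⊆ Ω) (hF : (frontier Ω).Nonempty) :
    0 < setDist S (frontier Ω) := by
  obtain ⟨x₀, hx₀S, hmin⟩ :=
    hS.exists_isMinOn hSne (continuous_infDist_pt (frontier Ω)).continuousOn
  rw [isMinOn_iff] at hmin
  have hx₀ : x₀ ∉ frontier Ω := by
    intro hmem
    rw [hΩop.frontier_eq] at hmem
    exact hmem.2 (hSΩ hx₀S)
  have hpos : 0 < Metric.infDist x₀ (frontier Ω) :=
    (isClosed_frontier.notMem_iff_infDist_pos hF).mp hx₀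
  refine lt_of_lt_of_le hpos ?_
  unfold setDist
  refine le_csInf ⟨dist x₀ hF.some, x₀, hx₀S, hF.some, hF.some_mem, rfl⟩ ?_
  rintro d ⟨a, ha, b, hb, rfl⟩
  exact le_trans (hmin a ha) (Metric.infDist_le_dist_of_mem hb)

lemma sum_halve (N : ℕ) (f : ℕ → ℝ) :
    ∑ k ∈ Finset.range (2*N), f (k/2) = 2 * ∑ i ∈ Finset.range N, f i := by
  induction N with
  | zero => simp
  | succ N ih =>
    have h : 2*(N+1) = 2*N + 1 + 1 := by ring
    rw [h, Finset.sum_range_succ, Finset.sum_range_succ, ih, Finset.sum_range_succ]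
    have e1 : (2*N)/2 = N := by omega
    have e2 : (2*N+1)/2 = N := by omega
    rw [e1, e2]; ring


lemma exists_piece {m : ℕ} (hm : 0 < m) {t : ℝ} (ht : t ∈ Set.Icc (0:ℝ) 1) :
    ∃ k < m, (k:ℝ)/m ≤ t ∧ t ≤ ((k:ℝ)+1)/m := by
  have hmR : (0:ℝ) < m := by exact_mod_cast hm
  rcases eq_or_lt_of_le ht.2 with h1 | h1
  · refine ⟨m - 1, Nat.sub_lt hm one_pos, ?_, ?_⟩
    · have hle : ((m-1:ℕ):ℝ) ≤ m := by exact_mod_cast Nat.sub_le m 1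
      rw [h1]
      exact div_le_one_of_le₀ hle hmR.le
    · have hcast : ((m-1:ℕ):ℝ) = (m:ℝ) - 1 := by
        have : (1:ℕ) ≤ m := hm
        push_cast [this]
        ring
      rw [h1, hcast]
      have he : ((m:ℝ)-1+1)/m = 1 := by field_simp; ring
      rw [he]
  · set k := ⌊(m:ℝ)*t⌋₊ with hk
    have hmt0 : 0 ≤ (m:ℝ)*t := mul_nonneg hmR.le ht.1
    have hfl : (k:ℝ) ≤ (m:ℝ)*t := Nat.floor_le hmt0
    have hfl2 : (m:ℝ)*t < (k:ℝ) + 1 := Nat.lt_floor_add_one _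
    have hkm : k < m := by
      rw [hk, Nat.floor_lt hmt0]
      calc (m:ℝ)*t < (m:ℝ)*1 := by
            exact mul_lt_mul_of_pos_left h1 hmR
        _ = m := mul_one _
    exact ⟨k, hkm, by rw [div_le_iff₀ hmR]; linarith,
      by rw [le_div_iff₀ hmR]; linarith⟩

lemma qhDist_le_polygonal {n : ℕ} (Ω : Set (EuclideanSpace ℝ (Fin n))) {m : ℕ} (hm : 0 < m)
    (q : ℕ → EuclideanSpace ℝ (Fin n)) (δ D : ℕ → ℝ)
    (hseg : ∀ k < m, ∀ x ∈ segment ℝ (q k) (q (k+1)),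
      x ∈ Ω ∧ δ k ≤ Metric.infDist x (frontier Ω))
    (hδ : ∀ k < m, 0 < δ k)
    (hD : ∀ k < m, dist (q k) (q (k+1)) ≤ D k) :
    qhDist Ω (q 0) (q m) ≤ ∑ k ∈ Finset.range m, D k / δ k := by
  classical
  have hmR : (0:ℝ) < m := by exact_mod_cast hm
  set γ : ℝ → EuclideanSpace ℝ (Fin n) := poly m q with hγ
  set g : ℝ → ℝ := fun t => ‖deriv γ t‖ / Metric.infDist (γ t) (frontier Ω) with hg
  set a : ℕ → ℝ := fun k => (k:ℝ)/m with ha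
  have ha0 : a 0 = 0 := by simp [ha]
  have ham : a m = 1 := by rw [ha]; exact div_self hmR.ne'
  have hak : ∀ k, a (k+1) = ((k:ℝ)+1)/m := by intro k; simp [ha]
  -- membership of the curve
  have hmem : ∀ t ∈ Set.Icc (0:ℝ) 1, γ t ∈ Ω := by
    intro t ht
    obtain ⟨k, hkm, h1, h2⟩ := exists_piece hm ht
    exact (hseg k hkm _ (poly_mem_segment q hkm h1 h2)).1
  -- per-piece analysis
  have piece : ∀ k < m, IntervalIntegrable g volume (a k) (a (k+1)) ∧
      (∫ t in (a k)..(a (k+1)), g t) ≤ D k / δ k := by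
    intro k hkm
    have hsub : a k ≤ a (k+1) := by
      rw [hak, ha]
      exact (div_le_div_iff_of_pos_right hmR).mpr (by linarith)
    have e1 : a k = (k:ℝ)/m := rfl
    have e2 : a (k+1) = ((k:ℝ)+1)/m := hak k
    set Δ := q (k+1) - q k with hΔ
    set φ : ℝ → EuclideanSpace ℝ (Fin n) := fun s => q k + ((m:ℝ)*s - k) • Δ with hφ
    set h : ℝ → ℝ := fun t => ((m:ℝ) * ‖Δ‖) / Metric.infDist (φ t) (frontier Ω) with hh
    have hφeq : ∀ t ∈ Set.Icc (a k) (a (k+1)), poly m q t = φ t := by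
      intro t ht
      rw [e1] at ht; rw [e2] at ht
      exact poly_eq_on q hkm ht.1 ht.2
    have hφseg : ∀ t ∈ Set.Icc (a k) (a (k+1)), φ t ∈ segment ℝ (q k) (q (k+1)) := by
      intro t ht
      have h1 := poly_mem_segment q hkm (e1 ▸ ht.1) (e2 ▸ ht.2)
      rwa [hφeq t ht] at h1
    have hcont : ContinuousOn h (Set.uIcc (a k) (a (k+1))) := by
      rw [Set.uIcc_of_le hsub]
      apply ContinuousOn.div continuousOn_const
      · apply Continuous.continuousOn
        apply (continuous_infDist_pt _).comp
        fun_prop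
      · intro t ht
        exact ne_of_gt (lt_of_lt_of_le (hδ k hkm) ((hseg k hkm _ (hφseg t ht)).2))
    have h_int : IntervalIntegrable h volume (a k) (a (k+1)) := hcont.intervalIntegrable
    have hIoo : ∀ t ∈ Set.Ioo (a k) (a (k+1)), g t = h t := by
      intro t ht
      have hts : t ∈ Set.Ioo ((k:ℝ)/m) (((k:ℝ)+1)/m) := ⟨e1 ▸ ht.1, e2 ▸ ht.2⟩
      have hd : deriv γ t = (m:ℝ) • Δ := poly_deriv q hkm hts
      have hγφ : γ t = φ t := hφeq t ⟨ht.1.le, ht.2.le⟩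
      show ‖deriv γ t‖ / Metric.infDist (γ t) (frontier Ω) = _
      rw [hd, hγφ, norm_smul, Real.norm_eq_abs, abs_of_nonneg hmR.le]
    have hae : ∀ᵐ t ∂(volume.restrict (Set.uIoc (a k) (a (k+1)))), g t = h t := by
      rw [Set.uIoc_of_le hsub, ← Measure.restrict_congr_set Ioo_ae_eq_Ioc]
      filter_upwards [ae_restrict_mem measurableSet_Ioo] with t ht
      exact hIoo t ht
    have g_int : IntervalIntegrable g volume (a k) (a (k+1)) := by
      rw [intervalIntegrable_iff] at h_int ⊢
      exact h_int.congr (hae.mono fun t e => e.symm)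
    refine ⟨g_int, ?_⟩
    have hval : (∫ t in (a k)..(a (k+1)), g t) = ∫ t in (a k)..(a (k+1)), h t := by
      apply intervalIntegral.integral_congr_ae
      have hne : ∀ᵐ x : ℝ ∂volume, x ≠ a (k+1) := by
        refine (ae_iff).mpr ?_
        simpa using measure_singleton (a (k+1))
      filter_upwards [hne] with x hx hxI
      rw [Set.uIoc_of_le hsub] at hxI
      exact hIoo x ⟨hxI.1, lt_of_le_of_ne hxI.2 hx⟩
    rw [hval]
    have hboundpt : ∀ t ∈ Set.Icc (a k) (a (k+1)), h t ≤ ((m:ℝ)*‖Δ‖)/δ k := by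
      intro t ht
      have h1 := (hseg k hkm _ (hφseg t ht)).2
      have h2 := hδ k hkm
      apply div_le_div_of_nonneg_left (by positivity) h2 h1
    calc (∫ t in (a k)..(a (k+1)), h t)
        ≤ ∫ _ in (a k)..(a (k+1)), ((m:ℝ)*‖Δ‖)/δ k :=
          intervalIntegral.integral_mono_on hsub h_int intervalIntegrable_const hboundpt
      _ = (a (k+1) - a k) * (((m:ℝ)*‖Δ‖)/δ k) := by
          rw [intervalIntegral.integral_const, smul_eq_mul]
      _ = ‖Δ‖/δ k := by
          rw [e1, e2]
          field_simp
          ring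
      _ ≤ D k / δ k := by
          have hDk : ‖Δ‖ ≤ D k := by
            rw [hΔ, ← dist_eq_norm, dist_comm]
            exact hD k hkm
          gcongr
          exact (hδ k hkm).le
  -- total
  have hsum : (∫ t in (0:ℝ)..1, g t) = ∑ k ∈ Finset.range m, ∫ t in (a k)..(a (k+1)), g t := by
    rw [intervalIntegral.sum_integral_adjacent_intervals (fun k hk => (piece k hk).1), ha0, ham]
  have htotal : (∫ t in (0:ℝ)..1, g t) ≤ ∑ k ∈ Finset.range m, D k / δ k := by
    rw [hsum]
    exact Finset.sum_le_sum fun k hk => (piece k (Finset.mem_range.mp hk)).2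
  have hbdd : BddBelow {L : ℝ | ∃ γ : ℝ → EuclideanSpace ℝ (Fin n),
      (∃ K : NNReal, LipschitzWith K γ) ∧ γ 0 = q 0 ∧ γ 1 = q m ∧
      (∀ t ∈ Set.Icc (0:ℝ) 1, γ t ∈ Ω) ∧
      L = ∫ t in (0:ℝ)..1, ‖deriv γ t‖ / Metric.infDist (γ t) (frontier Ω)} := by
    refine ⟨0, fun L hL => ?_⟩
    obtain ⟨γ', _, _, _, _, hLe⟩ := hL
    rw [hLe]
    exact intervalIntegral.integral_nonneg zero_le_one
      fun u _ => div_nonneg (norm_nonneg _) Metric.infDist_nonneg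
  refine le_trans (csInf_le hbdd ?_) htotal
  exact ⟨γ, poly_lipschitz m q, poly_zero m q, poly_one m q, hmem, rfl⟩


end QHAux
end QHAuxSection

/-- Chain estimate for the quasihyperbolic distance from a valid
subdivision. -/
theorem qh_chain_estimate {n : ℕ} (hn : 2 ≤ n)
    (Ω : Set (EuclideanSpace ℝ (Fin n))) (hΩop : IsOpen Ω) (hΩconn : IsConnected Ω)
    (hΩbd : Bornology.IsBounded Ω)
    (𝒮 : Set (Set (EuclideanSpace ℝ (Fin n)))) (h𝒮 : IsValidSubdivision Ω 𝒮)
    (z₀ z : EuclideanSpace ℝ (Fin n)) (hz₀ : z₀ ∈ ⋃₀ 𝒮) (hz : z ∈ ⋃₀ 𝒮)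
    (j : ℕ) (c : ℕ → Set (EuclideanSpace ℝ (Fin n)))
    (hc : ∀ i ≤ j, c i ∈ 𝒮) (hc0 : z₀ ∈ c 0) (hcj : z ∈ c j)
    (hbd : ∀ i < j, (frontier (c i) ∩ frontier (c (i+1))).Nonempty) :
    qhDist Ω z z₀ ≤ 2 * ∑ i ∈ Finset.range (j+1), Metric.diam (c i) / setDist (c i) (frontier Ω) := by
  classical
  obtain ⟨hstar, -, -, -⟩ := h𝒮
  have hprop : ∀ i ≤ j, IsClosed (c i) ∧ c i ⊆ Ω ∧ ∃ p ∈ c i, StarConvex ℝ p (c i) :=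
    fun i hi => hstar _ (hc i hi)
  set p : ℕ → EuclideanSpace ℝ (Fin n) :=
    fun i => if h : i ≤ j then ((hprop i h).2.2).choose else z with hpdef
  have hp : ∀ i ≤ j, p i ∈ c i ∧ StarConvex ℝ (p i) (c i) := by
    intro i hi
    have := ((hprop i hi).2.2).choose_spec
    rw [hpdef]
    simp only [dif_pos hi]
    exact this
  set w : ℕ → EuclideanSpace ℝ (Fin n) :=
    fun i => if h : i < j then (hbd i h).choose else z with hwdef
  have hw : ∀ i < j, w i ∈ frontier (c i) ∩ frontier (c (i+1)) := by
    intro i hi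
    have := (hbd i hi).choose_spec
    rw [hwdef]
    simp only [dif_pos hi]
    exact this
  have hΩne : Ω.Nonempty := hΩconn.nonempty
  have hFne : (frontier Ω).Nonempty := QHAux.frontier_nonempty Ω hn hΩne hΩbd
  have hfr : ∀ i ≤ j, frontier (c i) ⊆ c i := fun i hi => (hprop i hi).1.frontier_subset
  have hcompact : ∀ i ≤ j, IsCompact (c i) := by
    intro i hi
    rw [Metric.isCompact_iff_isClosed_bounded]
    exact ⟨(hprop i hi).1, hΩbd.subset (hprop i hi).2.1⟩
  have hδpos : ∀ i ≤ j, 0 < setDist (c i) (frontier Ω) := fun i hi =>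
    QHAux.setDist_pos hΩop (hcompact i hi) ⟨p i, (hp i hi).1⟩ (hprop i hi).2.1 hFne
  -- the chain of points
  set q : ℕ → EuclideanSpace ℝ (Fin n) := fun r =>
    if r = 0 then z else if 2*j+2 ≤ r then z₀
      else if r % 2 = 1 then p (j - (r-1)/2) else w (j - r/2) with hqdef
  have hq0 : q 0 = z := by simp [hqdef]
  have hqm : q (2*j+2) = z₀ := by simp [hqdef]
  have hqodd : ∀ i ≤ j, q (2*i+1) = p (j - i) := by
    intro i hi
    rw [hqdef]
    have h1 : ¬ (2*i+1 = 0) := by omega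
    have h2 : ¬ (2*j+2 ≤ 2*i+1) := by omega
    have h3 : (2*i+1) % 2 = 1 := by omega
    have h4 : (2*i+1-1)/2 = i := by omega
    simp only [if_neg h1, if_neg h2, if_pos h3, h4]
  have hqeven : ∀ i, 1 ≤ i → i ≤ j → q (2*i) = w (j - i) := by
    intro i h1i hij
    rw [hqdef]
    have h1 : ¬ (2*i = 0) := by omega
    have h2 : ¬ (2*j+2 ≤ 2*i) := by omega
    have h3 : ¬ ((2*i) % 2 = 1) := by omega
    have h4 : (2*i)/2 = i := by omega
    simp only [if_neg h1, if_neg h2, if_neg h3, h4]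
  -- membership of chain points
  have hqmem : ∀ k < 2*j+2, q k ∈ c (j - k/2) ∧ q (k+1) ∈ c (j - k/2) ∧
      segment ℝ (q k) (q (k+1)) ⊆ c (j - k/2) := by
    intro k hk
    set i := k/2 with hidef
    have hij : i ≤ j := by omega
    have hjij : j - i ≤ j := by omega
    rcases Nat.even_or_odd k with ⟨i', hi'⟩ | ⟨i', hi'⟩
    · -- k = 2*i'
      have hii : i = i' := by omega
      have hqk1 : q (k+1) = p (j - i) := by
        have : k + 1 = 2*i + 1 := by omega
        rw [this]
        exact hqodd i hij
      have hqk : q k ∈ c (j - i) := by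
        rcases Nat.eq_zero_or_pos i with h0 | h1
        · have : k = 0 := by omega
          rw [this, hq0, h0, Nat.sub_zero]
          exact hcj
        · have : k = 2*i := by omega
          rw [this, hqeven i h1 hij]
          have hlt : j - i < j := by omega
          exact hfr (j-i) hjij (hw (j-i) hlt).1
      refine ⟨hqk, hqk1 ▸ (hp (j-i) hjij).1, ?_⟩
      rw [hqk1, segment_symm]
      exact (hp (j-i) hjij).2.segment_subset hqk
    · -- k = 2*i' + 1
      have hii : i = i' := by omega
      have hqk : q k = p (j - i) := by
        have : k = 2*i + 1 := by omega
        rw [this]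
        exact hqodd i hij
      have hqk1 : q (k+1) ∈ c (j - i) := by
        rcases eq_or_lt_of_le hij with he | hlt
        · have hk2 : k + 1 = 2*j+2 := by omega
          have h0 : j - i = 0 := by omega
          rw [hk2, hqm, h0]
          exact hc0
        · have h1 : k + 1 = 2*(i+1) := by omega
          rw [h1, hqeven (i+1) (by omega) (by omega)]
          have h2 : j - (i+1) < j := by omega
          have h3 : j - (i+1) + 1 = j - i := by omega
          have := (hw (j-(i+1)) h2).2
          rw [h3] at this
          exact hfr (j-i) hjij this
      refine ⟨hqk ▸ (hp (j-i) hjij).1, hqk1, ?_⟩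
      rw [hqk]
      exact (hp (j-i) hjij).2.segment_subset hqk1
  -- apply the polygonal lemma
  have hmain := QHAux.qhDist_le_polygonal Ω (m := 2*j+2) (by omega) q
    (fun k => setDist (c (j - k/2)) (frontier Ω))
    (fun k => Metric.diam (c (j - k/2)))
    (by
      intro k hk x hx
      have h1 := (hqmem k hk).2.2 hx
      have hij : j - k/2 ≤ j := by omega
      exact ⟨(hprop _ hij).2.1 h1, QHAux.setDist_le_infDist hFne h1⟩)
    (fun k hk => hδpos _ (by omega))
    (by
      intro k hk
      have hij : j - k/2 ≤ j := by omega
      exact Metric.dist_le_diam_of_mem (hΩbd.subset (hprop _ hij).2.1)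
        (hqmem k hk).1 (hqmem k hk).2.1)
  rw [hq0, hqm] at hmain
  refine le_trans hmain (le_of_eq ?_)
  have h2j : 2*j+2 = 2*(j+1) := by ring
  rw [h2j, QHAux.sum_halve (j+1)
    (fun i => Metric.diam (c (j - i)) / setDist (c (j - i)) (frontier Ω))]
  congr 1
  have := Finset.sum_range_reflect
    (fun i => Metric.diam (c i) / setDist (c i) (frontier Ω)) (j+1)
  rw [← this]
  apply Finset.sum_congr rfl
  intro i hi
  congr 2 <;> omega
end

section
/- Let Ω be the open unit cube in ℝⁿ (n ≥ 2), let z₀ be the center point of Ω, and let 1 ≤ s < ∞. Then ∫_Ω k(z, z₀; Ω)^s dz ≤ (4√n)^s · n · Σ_{j=0}^{∞} (j+1)^s (1/3)^j; in particular, this series converges and ∫_Ω k(z, z₀; Ω)^s dz < ∞ for all s ≥ 1. -/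
open MeasureTheory Metric Set
open scoped ENNReal

namespace QHAux

variable {n : ℕ}

abbrev cube (n : ℕ) : Set (EuclideanSpace ℝ (Fin n)) := {z | ∀ i, 0 < z i ∧ z i < 1}

lemma coord_le_dist (x y : EuclideanSpace ℝ (Fin n)) (i : Fin n) :
    |x i - y i| ≤ dist x y := by
  rw [EuclideanSpace.dist_eq]
  have h1 : |x i - y i| = Real.sqrt (dist (x i) (y i) ^ 2) := by
    rw [Real.sqrt_sq (dist_nonneg), Real.dist_eq]
  rw [h1]
  apply Real.sqrt_le_sqrt
  exact Finset.single_le_sum (f := fun j => dist (x j) (y j) ^ 2)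
    (fun j _ => sq_nonneg _) (Finset.mem_univ i)

lemma cube_isOpen : IsOpen (cube n) := by
  have : cube n = ⋂ i : Fin n, ((fun z : EuclideanSpace ℝ (Fin n) => z i) ⁻¹' Ioi 0 ∩
      (fun z : EuclideanSpace ℝ (Fin n) => z i) ⁻¹' Iio 1) := by
    ext z; simp [cube, forall_and]
  rw [this]
  refine isOpen_iInter_of_finite fun i => ?_
  have hc : Continuous (fun z : EuclideanSpace ℝ (Fin n) => z i) :=
    (EuclideanSpace.proj i : EuclideanSpace ℝ (Fin n) →L[ℝ] ℝ).continuous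
  exact (isOpen_Ioi.preimage hc).inter (isOpen_Iio.preimage hc)

lemma cube_frontier_nonempty (hn : 1 ≤ n) : (frontier (cube n)).Nonempty := by
  haveI : Nonempty (Fin n) := ⟨⟨0, by omega⟩⟩
  by_contra h
  rw [Set.not_nonempty_iff_eq_empty] at h
  have hcl : IsClopen (cube n) := isClopen_iff_frontier_eq_empty.2 h
  rcases isClopen_iff.1 hcl with h0 | h1
  · have : (WithLp.toLp 2 (fun _ => (1/2 : ℝ)) : EuclideanSpace ℝ (Fin n)) ∈ cube n := by
      intro i; norm_num
    rw [h0] at this; exact this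
  · have : (WithLp.toLp 2 (fun _ => (2 : ℝ)) : EuclideanSpace ℝ (Fin n)) ∈ cube n := by
      rw [h1]; trivial
    have h2 := (this (Classical.arbitrary (Fin n))).2
    norm_num at h2

/-- The straight segment from `z` to the center gives the key pointwise bound. -/
lemma qh_bound (hn : 1 ≤ n) (z : EuclideanSpace ℝ (Fin n)) (hz : z ∈ cube n)
    (d : ℝ) (hd0 : 0 < d) (hd2 : d ≤ 1/2)
    (hdle : ∀ i, d ≤ z i ∧ z i ≤ 1 - d) :
    0 ≤ qhDist (cube n) z (WithLp.toLp 2 (fun _ => (1/2 : ℝ))) ∧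
    qhDist (cube n) z (WithLp.toLp 2 (fun _ => (1/2 : ℝ))) ≤
      Real.sqrt n * (1 + Real.log (1 / (2 * d))) := by
  classical
  set c : EuclideanSpace ℝ (Fin n) := (WithLp.toLp 2 (fun _ => (1/2 : ℝ))) with hc
  set γ : ℝ → EuclideanSpace ℝ (Fin n) := fun t => z + t • (c - z) with hγ
  set D : ℝ → ℝ := fun t => (1 - t) * d + t * (1/2) with hD
  have hγi : ∀ t i, γ t i = z i + t * (1/2 - z i) := by
    intro t i
    simp [hγ, hc, PiLp.add_apply, PiLp.smul_apply, PiLp.sub_apply, smul_eq_mul]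
  have hDlb : ∀ t ∈ Icc (0:ℝ) 1, d ≤ D t := by
    intro t ht; simp only [hD]; nlinarith [ht.1, ht.2]
  have hDpos : ∀ t ∈ Icc (0:ℝ) 1, 0 < D t := fun t ht => lt_of_lt_of_le hd0 (hDlb t ht)
  have hcoord : ∀ t ∈ Icc (0:ℝ) 1, ∀ i, D t ≤ γ t i ∧ γ t i ≤ 1 - D t := by
    intro t ht i
    have h1 := (hdle i).1
    have h2 := (hdle i).2
    rw [hγi]
    constructor
    · simp only [hD]; nlinarith [ht.1, ht.2]
    · simp only [hD]; nlinarith [ht.1, ht.2]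
  have hmem : ∀ t ∈ Icc (0:ℝ) 1, γ t ∈ cube n := by
    intro t ht i
    have h := hcoord t ht i
    have hp := hDpos t ht
    exact ⟨lt_of_lt_of_le hp h.1, by linarith [h.2]⟩
  -- infDist lower bound
  have hfr : (frontier (cube n)).Nonempty := cube_frontier_nonempty hn
  have hinf : ∀ t ∈ Icc (0:ℝ) 1, D t ≤ infDist (γ t) (frontier (cube n)) := by
    intro t ht
    by_contra hlt
    push_neg at hlt
    obtain ⟨y, hyfr, hy⟩ := (infDist_lt_iff hfr).1 hlt
    have hyΩ : y ∈ cube n := by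
      intro i
      have hco := hcoord t ht i
      have habs := coord_le_dist (γ t) y i
      have : |γ t i - y i| < D t := lt_of_le_of_lt habs hy
      rw [abs_lt] at this
      constructor
      · linarith [hco.1, this.2]
      · linarith [hco.2, this.1]
    rw [cube_isOpen.frontier_eq] at hyfr
    exact hyfr.2 hyΩ
  -- Lipschitz
  have hlip : LipschitzWith ‖c - z‖₊ γ := by
    apply LipschitzWith.of_dist_le_mul
    intro a b
    have : γ a - γ b = (a - b) • (c - z) := by
      simp only [hγ]; rw [sub_smul]; abel
    rw [dist_eq_norm, this, norm_smul, Real.dist_eq]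
    rw [coe_nnnorm]
    rw [Real.norm_eq_abs]
    ring_nf
    exact le_rfl
  -- derivative
  have hderiv : ∀ t : ℝ, HasDerivAt γ (c - z) t := by
    intro t
    have h1 : HasDerivAt (fun u : ℝ => u • (c - z)) ((1:ℝ) • (c - z)) t :=
      (hasDerivAt_id t).smul_const (c - z)
    simpa [hγ] using h1.const_add z
  have hderiv' : ∀ t : ℝ, deriv γ t = c - z := fun t => (hderiv t).deriv
  -- norm bound
  have hnorm : ‖c - z‖ ≤ Real.sqrt n * (1/2) := by
    rw [EuclideanSpace.norm_eq]
    have hterm : ∀ i : Fin n, ‖(c - z) i‖ ^ 2 ≤ (1/2)^2 := by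
      intro i
      have h1 := (hz i).1
      have h2 := (hz i).2
      have : (c - z) i = 1/2 - z i := by
        simp [hc, PiLp.sub_apply]
      rw [this, Real.norm_eq_abs, sq_abs]
      nlinarith
    have hsum : (∑ i : Fin n, ‖(c - z) i‖ ^ 2) ≤ (n : ℝ) * (1/2)^2 := by
      calc (∑ i : Fin n, ‖(c - z) i‖ ^ 2) ≤ ∑ _i : Fin n, ((1:ℝ)/2)^2 :=
            Finset.sum_le_sum fun i _ => hterm i
        _ = (n : ℝ) * (1/2)^2 := by
            rw [Finset.sum_const, Finset.card_univ, Fintype.card_fin, nsmul_eq_mul]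
    calc Real.sqrt (∑ i : Fin n, ‖(c - z) i‖ ^ 2) ≤ Real.sqrt ((n:ℝ) * (1/2)^2) :=
          Real.sqrt_le_sqrt hsum
      _ = Real.sqrt n * (1/2) := by
          rw [Real.sqrt_mul (Nat.cast_nonneg n), Real.sqrt_sq (by norm_num : (0:ℝ) ≤ 1/2)]
  -- the integral for γ is in the defining set
  set L : ℝ := ∫ t in (0:ℝ)..1, ‖deriv γ t‖ / infDist (γ t) (frontier (cube n)) with hL
  have hmemS : L ∈ {L : ℝ | ∃ γ : ℝ → EuclideanSpace ℝ (Fin n),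
      (∃ K : NNReal, LipschitzWith K γ) ∧ γ 0 = z ∧ γ 1 = c ∧
      (∀ t ∈ Set.Icc (0:ℝ) 1, γ t ∈ cube n) ∧
      L = ∫ t in (0:ℝ)..1, ‖deriv γ t‖ / Metric.infDist (γ t) (frontier (cube n))} := by
    refine ⟨γ, ⟨_, hlip⟩, ?_, ?_, hmem, rfl⟩
    · simp [hγ]
    · simp [hγ]
  have hbdd : BddBelow {L : ℝ | ∃ γ : ℝ → EuclideanSpace ℝ (Fin n),
      (∃ K : NNReal, LipschitzWith K γ) ∧ γ 0 = z ∧ γ 1 = c ∧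
      (∀ t ∈ Set.Icc (0:ℝ) 1, γ t ∈ cube n) ∧
      L = ∫ t in (0:ℝ)..1, ‖deriv γ t‖ / Metric.infDist (γ t) (frontier (cube n))} := by
    refine ⟨0, ?_⟩
    rintro x ⟨γ', _, _, _, _, rfl⟩
    apply intervalIntegral.integral_nonneg zero_le_one
    intro u _
    exact div_nonneg (norm_nonneg _) infDist_nonneg
  have hqh_le_L : qhDist (cube n) z c ≤ L := csInf_le hbdd hmemS
  have hqh_nonneg : 0 ≤ qhDist (cube n) z c := by
    apply le_csInf ⟨L, hmemS⟩
    rintro x ⟨γ', _, _, _, _, rfl⟩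
    apply intervalIntegral.integral_nonneg zero_le_one
    intro u _
    exact div_nonneg (norm_nonneg _) infDist_nonneg
  refine ⟨hqh_nonneg, le_trans hqh_le_L ?_⟩
  -- Now bound L.
  have hLeq : L = ∫ t in (0:ℝ)..1, ‖c - z‖ / infDist (γ t) (frontier (cube n)) := by
    rw [hL]
    congr 1
    funext t
    rw [hderiv' t]
  have hγcont : Continuous γ := hlip.continuous
  have hicont : Continuous fun t => infDist (γ t) (frontier (cube n)) :=
    (continuous_infDist_pt _).comp hγcont
  have huIcc : uIcc (0:ℝ) 1 = Icc 0 1 := uIcc_of_le zero_le_one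
  have hg_int : IntervalIntegrable
      (fun t => ‖c - z‖ / infDist (γ t) (frontier (cube n))) volume 0 1 := by
    apply ContinuousOn.intervalIntegrable
    rw [huIcc]
    exact continuousOn_const.div hicont.continuousOn
      (fun t ht => ne_of_gt (lt_of_lt_of_le (hDpos t ht) (hinf t ht)))
  have hDcont : Continuous D := by
    simp only [hD]
    exact ((continuous_const.sub continuous_id).mul continuous_const).add
      (continuous_id.mul continuous_const)
  set F : ℝ → ℝ := fun t => (Real.sqrt n * (1/2)) / D t with hF
  have hF_int : IntervalIntegrable F volume 0 1 := by
    apply ContinuousOn.intervalIntegrable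
    rw [huIcc]
    exact continuousOn_const.div hDcont.continuousOn
      (fun t ht => ne_of_gt (hDpos t ht))
  have h2d1 : 2 * d ≤ 1 := by linarith
  have h2d0 : 0 < 2 * d := by linarith
  have hsub1 : uIcc (0:ℝ) (2*d) ⊆ uIcc (0:ℝ) 1 := by
    rw [huIcc, uIcc_of_le (le_of_lt h2d0)]
    exact Icc_subset_Icc le_rfl h2d1
  have hsub2 : uIcc (2*d) (1:ℝ) ⊆ uIcc (0:ℝ) 1 := by
    rw [huIcc, uIcc_of_le h2d1]
    exact Icc_subset_Icc (le_of_lt h2d0) le_rfl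
  have hstep1 : (∫ t in (0:ℝ)..1, ‖c - z‖ / infDist (γ t) (frontier (cube n)))
      ≤ ∫ t in (0:ℝ)..1, F t := by
    apply intervalIntegral.integral_mono_on zero_le_one hg_int hF_int
    intro t ht
    exact div_le_div₀ (by positivity) hnorm (hDpos t ht) (hinf t ht)
  have hsplit : (∫ t in (0:ℝ)..1, F t)
      = (∫ t in (0:ℝ)..(2*d), F t) + ∫ t in (2*d)..1, F t :=
    (intervalIntegral.integral_add_adjacent_intervals
      (hF_int.mono_set hsub1) (hF_int.mono_set hsub2)).symm
  have hpart1 : (∫ t in (0:ℝ)..(2*d), F t) ≤ Real.sqrt n := by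
    have hci : IntervalIntegrable (fun _ : ℝ => (Real.sqrt n * (1/2)) / d) volume 0 (2*d) :=
      intervalIntegrable_const
    have hb : ∀ t ∈ Icc (0:ℝ) (2*d), F t ≤ (Real.sqrt n * (1/2)) / d := by
      intro t ht
      have ht01 : t ∈ Icc (0:ℝ) 1 := ⟨ht.1, le_trans ht.2 h2d1⟩
      exact div_le_div₀ (by positivity) le_rfl hd0 (hDlb t ht01)
    calc (∫ t in (0:ℝ)..(2*d), F t) ≤ ∫ _t in (0:ℝ)..(2*d), (Real.sqrt n * (1/2)) / d :=
          intervalIntegral.integral_mono_on (le_of_lt h2d0)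
            (hF_int.mono_set hsub1) hci hb
      _ = (2*d - 0) • ((Real.sqrt n * (1/2)) / d) := intervalIntegral.integral_const _
      _ = Real.sqrt n := by
          rw [smul_eq_mul, sub_zero]
          field_simp
  have hpart2 : (∫ t in (2*d)..1, F t) ≤ Real.sqrt n * Real.log (1 / (2*d)) := by
    have hcont2 : ContinuousOn (fun t : ℝ => Real.sqrt n * (1/t)) (uIcc (2*d) 1) := by
      rw [uIcc_of_le h2d1]
      exact continuousOn_const.mul (continuousOn_const.div continuousOn_id
        (fun t ht => ne_of_gt (lt_of_lt_of_le h2d0 ht.1)))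
    have hint2 : IntervalIntegrable (fun t : ℝ => Real.sqrt n * (1/t)) volume (2*d) 1 :=
      hcont2.intervalIntegrable
    have hb : ∀ t ∈ Icc (2*d) (1:ℝ), F t ≤ Real.sqrt n * (1/t) := by
      intro t ht
      have htpos : 0 < t := lt_of_lt_of_le h2d0 ht.1
      have ht01 : t ∈ Icc (0:ℝ) 1 := ⟨le_of_lt htpos, ht.2⟩
      have hDt : t * (1/2) ≤ D t := by
        simp only [hD]
        nlinarith [ht01.1, ht01.2]
      have : F t ≤ (Real.sqrt n * (1/2)) / (t * (1/2)) :=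
        div_le_div₀ (by positivity) le_rfl (by positivity) hDt
      calc F t ≤ (Real.sqrt n * (1/2)) / (t * (1/2)) := this
        _ = Real.sqrt n * (1/t) := by field_simp
    calc (∫ t in (2*d)..1, F t) ≤ ∫ t in (2*d)..1, Real.sqrt n * (1/t) :=
          intervalIntegral.integral_mono_on h2d1 (hF_int.mono_set hsub2) hint2 hb
      _ = Real.sqrt n * ∫ t in (2*d)..1, (1/t) :=
          intervalIntegral.integral_const_mul _ _
      _ = Real.sqrt n * Real.log (1 / (2*d)) := by
          rw [integral_one_div]
          rw [uIcc_of_le h2d1]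
          intro h0
          exact absurd h0.1 (not_le.2 h2d0)
  rw [hLeq]
  calc (∫ t in (0:ℝ)..1, ‖c - z‖ / infDist (γ t) (frontier (cube n)))
      ≤ ∫ t in (0:ℝ)..1, F t := hstep1
    _ = (∫ t in (0:ℝ)..(2*d), F t) + ∫ t in (2*d)..1, F t := hsplit
    _ ≤ Real.sqrt n + Real.sqrt n * Real.log (1 / (2*d)) := add_le_add hpart1 hpart2
    _ = Real.sqrt n * (1 + Real.log (1 / (2*d))) := by ring


lemma vol_layer (h : ℝ) (hh0 : 0 ≤ h) :
    volume {z : EuclideanSpace ℝ (Fin n) |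
      (∀ k, 0 ≤ z k ∧ z k ≤ 1) ∧ ∃ i, min (z i) (1 - z i) ≤ h} ≤
      (n : ℝ≥0∞) * ENNReal.ofReal (2 * h) := by
  classical
  set J : Fin n → Fin n → Set ℝ := fun i k =>
    if k = i then Icc (0:ℝ) h ∪ Icc (1-h) 1 else Icc (0:ℝ) 1 with hJ
  set T : Fin n → Set (EuclideanSpace ℝ (Fin n)) := fun i => {y | ∀ k, y k ∈ J i k} with hT
  have hsubset : {z : EuclideanSpace ℝ (Fin n) |
      (∀ k, 0 ≤ z k ∧ z k ≤ 1) ∧ ∃ i, min (z i) (1 - z i) ≤ h} ⊆ ⋃ i, T i := by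
    rintro z ⟨hz, i, hi⟩
    refine Set.mem_iUnion.2 ⟨i, fun k => ?_⟩
    by_cases hk : k = i
    · subst hk
      simp only [hJ, if_pos rfl]
      rcases le_total (z k) (1 - z k) with hle | hle
      · rw [min_eq_left hle] at hi
        exact Or.inl ⟨(hz k).1, hi⟩
      · rw [min_eq_right hle] at hi
        exact Or.inr ⟨by linarith, (hz k).2⟩
    · simp only [hJ, if_neg hk]
      exact ⟨(hz k).1, (hz k).2⟩
  have hTvol : ∀ i, volume (T i) ≤ ENNReal.ofReal (2 * h) := by
    intro i
    have hpre : T i = (MeasurableEquiv.toLp 2 (Fin n → ℝ)).symm ⁻¹' (Set.univ.pi (J i)) := by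
      ext y
      simp [hT, Set.mem_pi, MeasurableEquiv.coe_toLp_symm]
    have hmeas : MeasurableSet (Set.univ.pi (J i)) := by
      apply MeasurableSet.univ_pi
      intro k
      by_cases hk : k = i
      · simp only [hJ, if_pos hk]
        exact measurableSet_Icc.union measurableSet_Icc
      · simp only [hJ, if_neg hk]
        exact measurableSet_Icc
    have hvol : volume (T i) = volume (Set.univ.pi (J i)) := by
      rw [hpre]
      exact (EuclideanSpace.volume_preserving_symm_measurableEquiv_toLp (Fin n)).measure_preimage
        hmeas.nullMeasurableSet
    rw [hvol, volume_pi_pi]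
    have hJvol : ∀ k, volume (J i k)
        = if k = i then volume (Icc (0:ℝ) h ∪ Icc (1-h) 1) else 1 := by
      intro k
      by_cases hk : k = i
      · simp [hJ, hk]
      · simp [hJ, hk, Real.volume_Icc]
    calc (∏ k, volume (J i k))
        = ∏ k, (if k = i then volume (Icc (0:ℝ) h ∪ Icc (1-h) 1) else 1) :=
          Finset.prod_congr rfl fun k _ => hJvol k
      _ = volume (Icc (0:ℝ) h ∪ Icc (1-h) 1) := by
          rw [Finset.prod_ite_eq' Finset.univ i
            (fun _ => volume (Icc (0:ℝ) h ∪ Icc (1-h) 1))]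
          simp
      _ ≤ volume (Icc (0:ℝ) h) + volume (Icc (1-h) 1) := measure_union_le _ _
      _ = ENNReal.ofReal (2 * h) := by
          rw [Real.volume_Icc, Real.volume_Icc]
          rw [← ENNReal.ofReal_add (by linarith) (by linarith)]
          congr 1
          ring
  calc volume {z : EuclideanSpace ℝ (Fin n) |
        (∀ k, 0 ≤ z k ∧ z k ≤ 1) ∧ ∃ i, min (z i) (1 - z i) ≤ h}
      ≤ volume (⋃ i, T i) := measure_mono hsubset
    _ ≤ ∑' i : Fin n, volume (T i) := measure_iUnion_le _
    _ = ∑ i : Fin n, volume (T i) := tsum_fintype _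
    _ ≤ ∑ _i : Fin n, ENNReal.ofReal (2 * h) := Finset.sum_le_sum fun i _ => hTvol i
    _ = (n : ℝ≥0∞) * ENNReal.ofReal (2 * h) := by
        rw [Finset.sum_const, Finset.card_univ, Fintype.card_fin, nsmul_eq_mul]


lemma summable_aux (s : ℝ) (hs : 1 ≤ s) :
    Summable (fun j : ℕ => (j+1 : ℝ) ^ s * (1/3 : ℝ) ^ j) := by
  set k := ⌈s⌉₊ with hk
  have hg : Summable (fun m : ℕ => (m:ℝ)^k * (1/3:ℝ)^m) := by
    apply summable_pow_mul_geometric_of_norm_lt_one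
    rw [Real.norm_eq_abs, abs_of_pos (by norm_num : (0:ℝ) < 1/3)]
    norm_num
  have hshift : Summable (fun j : ℕ => 3 * ((((j+1):ℕ):ℝ)^k * (1/3:ℝ)^(j+1))) :=
    (hg.comp_injective Nat.succ_injective).mul_left 3
  apply Summable.of_nonneg_of_le (fun j => by positivity) _ hshift
  intro j
  have h1 : ((j:ℝ)+1)^s ≤ ((j:ℝ)+1)^((k:ℕ):ℝ) := by
    apply Real.rpow_le_rpow_of_exponent_le
    · have : (0:ℝ) ≤ j := Nat.cast_nonneg j
      linarith
    · exact le_trans (Nat.le_ceil s) (by rw [hk])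
  rw [Real.rpow_natCast] at h1
  calc ((j:ℝ)+1)^s * (1/3:ℝ)^j ≤ ((j:ℝ)+1)^k * (1/3:ℝ)^j :=
        mul_le_mul_of_nonneg_right h1 (by positivity)
    _ = 3 * ((((j+1):ℕ):ℝ)^k * (1/3:ℝ)^(j+1)) := by
        push_cast
        ring

end QHAux

/-- For the open unit cube with base point its center, the
`L^s`-integral of the quasihyperbolic distance is bounded by
`(4√n)^s · n · Σ (j+1)^s (1/3)^j`; in particular the series converges and the
integral is finite. -/
theorem cube_qh_integral_bound (n : ℕ) (hn : 2 ≤ n) (s : ℝ) (hs : 1 ≤ s) :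
    (∫⁻ z in {z : EuclideanSpace ℝ (Fin n) | ∀ i, 0 < z i ∧ z i < 1},
        ENNReal.ofReal (qhDist {z : EuclideanSpace ℝ (Fin n) | ∀ i, 0 < z i ∧ z i < 1}
          z (WithLp.toLp 2 (fun _ => (1/2 : ℝ))) ^ s)) ≤
      ENNReal.ofReal ((4 * Real.sqrt n) ^ s * n *
        ∑' j : ℕ, (j+1 : ℝ) ^ s * (1/3 : ℝ) ^ j) ∧
    Summable (fun j : ℕ => (j+1 : ℝ) ^ s * (1/3 : ℝ) ^ j) ∧
    (∫⁻ z in {z : EuclideanSpace ℝ (Fin n) | ∀ i, 0 < z i ∧ z i < 1},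
        ENNReal.ofReal (qhDist {z : EuclideanSpace ℝ (Fin n) | ∀ i, 0 < z i ∧ z i < 1}
          z (WithLp.toLp 2 (fun _ => (1/2 : ℝ))) ^ s)) < ⊤ := by
  classical
  haveI : Nonempty (Fin n) := ⟨⟨0, by omega⟩⟩
  have hn1 : 1 ≤ n := by omega
  have hs0 : 0 ≤ s := by linarith
  have hsum := QHAux.summable_aux s hs
  set C : Set (EuclideanSpace ℝ (Fin n)) := {z | ∀ i, 0 < z i ∧ z i < 1} with hC
  set dm : EuclideanSpace ℝ (Fin n) → ℝ :=
    fun z => Finset.univ.inf' Finset.univ_nonempty fun i => min (z i) (1 - z i) with hdm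
  have hdm_pos : ∀ z ∈ C, 0 < dm z := by
    intro z hz
    rw [hdm]
    rw [Finset.lt_inf'_iff]
    intro i _
    exact lt_min (hz i).1 (by linarith [(hz i).2])
  have hdm_half : ∀ z ∈ C, dm z ≤ 1/2 := by
    intro z hz
    set i0 := Classical.arbitrary (Fin n)
    have h1 : dm z ≤ min (z i0) (1 - z i0) := Finset.inf'_le _ (Finset.mem_univ i0)
    have h2 := min_le_left (z i0) (1 - z i0)
    have h3 := min_le_right (z i0) (1 - z i0)
    linarith
  have hdm_lb : ∀ z ∈ C, ∀ i, dm z ≤ z i ∧ z i ≤ 1 - dm z := by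
    intro z hz i
    have h1 : dm z ≤ min (z i) (1 - z i) := Finset.inf'_le _ (Finset.mem_univ i)
    have h2 := min_le_left (z i) (1 - z i)
    have h3 := min_le_right (z i) (1 - z i)
    exact ⟨by linarith, by linarith⟩
  set A : ℕ → Set (EuclideanSpace ℝ (Fin n)) :=
    fun j => {z | z ∈ C ∧ 2 * dm z ≤ (1/3:ℝ)^j} with hA
  have hcover : C ⊆ ⋃ j, (A j \ A (j+1)) := by
    intro z hz
    have hex : ∃ j, z ∉ A j := by
      obtain ⟨j, hj⟩ := exists_pow_lt_of_lt_one (mul_pos two_pos (hdm_pos z hz))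
        (by norm_num : (1/3:ℝ) < 1)
      exact ⟨j, fun hmem => absurd hmem.2 (not_le.2 hj)⟩
    have hm := Nat.find_spec hex
    have hm0 : Nat.find hex ≠ 0 := by
      intro h0
      apply hm
      rw [h0]
      refine ⟨hz, ?_⟩
      have := hdm_half z hz
      norm_num
      linarith
    obtain ⟨m', hm'⟩ := Nat.exists_eq_succ_of_ne_zero hm0
    have hmem' : z ∈ A m' := by
      by_contra hcon
      exact absurd (Nat.find_min hex (by omega) hcon) (by simp)
    refine Set.mem_iUnion.2 ⟨m', hmem', ?_⟩
    rw [show m' + 1 = Nat.find hex from hm'.symm]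
    exact hm
  have hqh_bound : ∀ (j : ℕ), ∀ z ∈ A j \ A (j+1),
      ENNReal.ofReal (qhDist C z (WithLp.toLp 2 (fun _ => (1/2 : ℝ))) ^ s) ≤
      ENNReal.ofReal ((4 * Real.sqrt n * ((j:ℝ)+1)) ^ s) := by
    intro j z hzE
    obtain ⟨⟨hz, _⟩, hz2⟩ := hzE
    have hgt : (1/3:ℝ)^(j+1) < 2 * dm z := by
      by_contra hcon
      exact hz2 ⟨hz, not_lt.1 hcon⟩
    have hd0 := hdm_pos z hz
    have h2d0 : (0:ℝ) < 2 * dm z := by linarith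
    obtain ⟨hqh0, hqhle⟩ := QHAux.qh_bound hn1 z hz (dm z) hd0 (hdm_half z hz) (hdm_lb z hz)
    have hlog : Real.log (1 / (2 * dm z)) ≤ 2 * ((j:ℝ)+1) := by
      have h3 : (1:ℝ) / (2 * dm z) < 3^(j+1) := by
        rw [div_lt_iff₀ h2d0]
        calc (1:ℝ) = 3^(j+1) * (1/3:ℝ)^(j+1) := by
              rw [← mul_pow]; norm_num
          _ < 3^(j+1) * (2 * dm z) :=
              mul_lt_mul_of_pos_left hgt (pow_pos (by norm_num) _)
          _ = 3^(j+1) * (2 * dm z) * 1 := by ring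
          _ = _ := by ring
      have hlog2 : Real.log (1 / (2 * dm z)) ≤ Real.log ((3:ℝ)^(j+1)) :=
        Real.log_le_log (by positivity) h3.le
      have hlog3 : Real.log ((3:ℝ)^(j+1)) = ((j:ℝ)+1) * Real.log 3 := by
        rw [Real.log_pow]
        push_cast
        ring
      have hlog4 : Real.log 3 ≤ 2 := by
        have := Real.log_le_sub_one_of_pos (by norm_num : (0:ℝ) < 3)
        linarith
      have hj0 : (0:ℝ) ≤ (j:ℝ) := Nat.cast_nonneg j
      nlinarith
    have hqhle2 : qhDist C z (WithLp.toLp 2 (fun _ => (1/2 : ℝ))) ≤ 4 * Real.sqrt n * ((j:ℝ)+1) := by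
      have hsq : (1:ℝ) ≤ Real.sqrt n := by
        rw [show (1:ℝ) = Real.sqrt 1 from (Real.sqrt_one).symm]
        exact Real.sqrt_le_sqrt (by exact_mod_cast hn1)
      have hj0 : (0:ℝ) ≤ (j:ℝ) := Nat.cast_nonneg j
      calc qhDist C z (WithLp.toLp 2 (fun _ => (1/2 : ℝ))) ≤
            Real.sqrt n * (1 + Real.log (1 / (2 * dm z))) := hqhle
        _ ≤ Real.sqrt n * (1 + 2 * ((j:ℝ)+1)) := by
            apply mul_le_mul_of_nonneg_left _ (Real.sqrt_nonneg _)
            linarith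
        _ ≤ 4 * Real.sqrt n * ((j:ℝ)+1) := by nlinarith
    exact ENNReal.ofReal_le_ofReal (Real.rpow_le_rpow hqh0 hqhle2 hs0)
  have hAvol : ∀ j : ℕ, volume (A j) ≤ (n : ℝ≥0∞) * ENNReal.ofReal ((1/3:ℝ)^j) := by
    intro j
    have hhalf : (0:ℝ) ≤ (1/3:ℝ)^j / 2 := by positivity
    have hsub : A j ⊆ {z : EuclideanSpace ℝ (Fin n) |
        (∀ k, 0 ≤ z k ∧ z k ≤ 1) ∧ ∃ i, min (z i) (1 - z i) ≤ (1/3:ℝ)^j / 2} := by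
      rintro z ⟨hz, hzd⟩
      refine ⟨fun k => ⟨(hz k).1.le, (hz k).2.le⟩, ?_⟩
      have : dm z ≤ (1/3:ℝ)^j / 2 := by linarith
      rw [hdm] at this
      obtain ⟨i, _, hi⟩ := (Finset.inf'_le_iff Finset.univ_nonempty).1 this
      exact ⟨i, hi⟩
    calc volume (A j) ≤ _ := measure_mono hsub
      _ ≤ (n : ℝ≥0∞) * ENNReal.ofReal (2 * ((1/3:ℝ)^j / 2)) := QHAux.vol_layer _ hhalf
      _ = (n : ℝ≥0∞) * ENNReal.ofReal ((1/3:ℝ)^j) := by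
          congr 2
          ring
  have hmain : (∫⁻ z in C, ENNReal.ofReal (qhDist C z (WithLp.toLp 2 (fun _ => (1/2 : ℝ))) ^ s)) ≤
      ENNReal.ofReal ((4 * Real.sqrt n) ^ s * n *
        ∑' j : ℕ, (j+1 : ℝ) ^ s * (1/3 : ℝ) ^ j) := by
    have hsum' : Summable (fun j : ℕ => (4 * Real.sqrt n)^s * (n:ℝ) * ((j+1 : ℝ)^s * (1/3:ℝ)^j)) :=
      hsum.mul_left _
    calc (∫⁻ z in C, ENNReal.ofReal (qhDist C z (WithLp.toLp 2 (fun _ => (1/2 : ℝ))) ^ s))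
        ≤ ∫⁻ z in ⋃ j, (A j \ A (j+1)), ENNReal.ofReal (qhDist C z (WithLp.toLp 2 (fun _ => (1/2 : ℝ))) ^ s) :=
          lintegral_mono_set hcover
      _ ≤ ∑' j : ℕ, ∫⁻ z in A j \ A (j+1), ENNReal.ofReal (qhDist C z (WithLp.toLp 2 (fun _ => (1/2 : ℝ))) ^ s) :=
          lintegral_iUnion_le _ _
      _ ≤ ∑' j : ℕ, ENNReal.ofReal ((4 * Real.sqrt n * ((j:ℝ)+1)) ^ s) *
            ((n : ℝ≥0∞) * ENNReal.ofReal ((1/3:ℝ)^j)) := by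
          apply ENNReal.tsum_le_tsum
          intro j
          calc (∫⁻ z in A j \ A (j+1), ENNReal.ofReal (qhDist C z (WithLp.toLp 2 (fun _ => (1/2 : ℝ))) ^ s))
              ≤ ∫⁻ _z in A j \ A (j+1), ENNReal.ofReal ((4 * Real.sqrt n * ((j:ℝ)+1)) ^ s) :=
                setLIntegral_mono measurable_const (hqh_bound j)
            _ = ENNReal.ofReal ((4 * Real.sqrt n * ((j:ℝ)+1)) ^ s) * volume (A j \ A (j+1)) :=
                setLIntegral_const _ _
            _ ≤ ENNReal.ofReal ((4 * Real.sqrt n * ((j:ℝ)+1)) ^ s) *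
                  ((n : ℝ≥0∞) * ENNReal.ofReal ((1/3:ℝ)^j)) :=
                mul_le_mul_right (le_trans (measure_mono diff_subset) (hAvol j)) _
      _ = ∑' j : ℕ, ENNReal.ofReal ((4 * Real.sqrt n)^s * (n:ℝ) * ((j+1 : ℝ)^s * (1/3:ℝ)^j)) := by
          congr 1
          funext j
          rw [← ENNReal.ofReal_natCast n, ← ENNReal.ofReal_mul (Nat.cast_nonneg n),
            ← ENNReal.ofReal_mul (by positivity)]
          congr 1
          rw [show (4 * Real.sqrt n * ((j:ℝ)+1)) = (4 * Real.sqrt n) * ((j:ℝ)+1) from rfl,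
            Real.mul_rpow (by positivity) (by positivity)]
          ring
      _ = ENNReal.ofReal (∑' j : ℕ, (4 * Real.sqrt n)^s * (n:ℝ) * ((j+1 : ℝ)^s * (1/3:ℝ)^j)) :=
          (ENNReal.ofReal_tsum_of_nonneg (fun j => by positivity) hsum').symm
      _ = ENNReal.ofReal ((4 * Real.sqrt n) ^ s * n *
            ∑' j : ℕ, (j+1 : ℝ) ^ s * (1/3 : ℝ) ^ j) := by
          rw [tsum_mul_left]
  exact ⟨hmain, hsum, lt_of_le_of_lt hmain ENNReal.ofReal_lt_top⟩
end

section
/- Let n ≥ 2 and α > 1. There exists a constant C(α) > 0 such that for all integers j, m ≥ 1, with ℓ = ⌊log₂ m⌋ + 1, the Euclidean distance from S_{j,m} to the boundary of Ω_α satisfies δ(S_{j,m}) ≥ C(α) · 2^{−(αj + ℓ)}. -/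
open MeasureTheory Metric Set
open scoped ENNReal

/-- The distance of `z` from the first coordinate axis. -/
noncomputable def radial {n : ℕ} [NeZero n] (z : EuclideanSpace ℝ (Fin n)) : ℝ :=
  Real.sqrt (∑ i ∈ Finset.univ.erase (0 : Fin n), z i ^ 2)

/-- The cusp domain `Ω_α = {0 < x < 1, |y| < x^α} ⊆ ℝⁿ`. -/
noncomputable def cuspDomain (n : ℕ) [NeZero n] (α : ℝ) : Set (EuclideanSpace ℝ (Fin n)) :=
  {z | 0 < z 0 ∧ z 0 < 1 ∧ radial z < (z 0) ^ α}

/-- The set `S_{j,m}` of the generalized Whitney subdivision of the cusp, where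
`ℓ = ⌊log₂ m⌋ + 1`. -/
noncomputable def cuspCell (n : ℕ) [NeZero n] (α : ℝ) (j m : ℕ) :
    Set (EuclideanSpace ℝ (Fin n)) :=
  let ℓ := Nat.log 2 m + 1
  {z | (m:ℝ)/2^(j+ℓ) ≤ z 0 ∧ z 0 ≤ (m+1:ℝ)/2^(j+ℓ) ∧
    (1 - 1/2^(ℓ-1)) * (z 0) ^ α ≤ radial z ∧ radial z ≤ (1 - 1/2^ℓ) * (z 0) ^ α}

set_option maxHeartbeats 1000000
set_option linter.deprecated false

noncomputable def proj0 {n : ℕ} [NeZero n] (u : EuclideanSpace ℝ (Fin n)) :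
    EuclideanSpace ℝ (Fin n) := WithLp.toLp 2 (fun i => if i = 0 then 0 else u i)

lemma radial_eq_norm_proj0 {n : ℕ} [NeZero n] (u : EuclideanSpace ℝ (Fin n)) :
    radial u = ‖proj0 u‖ := by
  rw [radial, EuclideanSpace.norm_eq]
  congr 1
  rw [← Finset.sum_erase_add _ _ (Finset.mem_univ (0 : Fin n))]
  have h0 : ‖proj0 u 0‖ ^ 2 = 0 := by simp [proj0]
  rw [h0, add_zero]
  refine Finset.sum_congr rfl fun i hi => ?_
  have hi0 : i ≠ 0 := (Finset.mem_erase.mp hi).1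
  simp [proj0, hi0, sq_abs]

lemma norm_proj0_le {n : ℕ} [NeZero n] (u : EuclideanSpace ℝ (Fin n)) :
    ‖proj0 u‖ ≤ ‖u‖ := by
  rw [EuclideanSpace.norm_eq, EuclideanSpace.norm_eq]
  apply Real.sqrt_le_sqrt
  apply Finset.sum_le_sum
  intro i _
  by_cases hi : i = 0 <;> simp [proj0, hi] <;> positivity

lemma radial_le_radial_add_dist {n : ℕ} [NeZero n] (z a : EuclideanSpace ℝ (Fin n)) :
    radial z ≤ radial a + dist z a := by
  have hsplit : proj0 z = proj0 a + proj0 (z - a) := by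
    ext i
    by_cases hi : i = 0 <;> simp [proj0, hi]
  rw [radial_eq_norm_proj0, radial_eq_norm_proj0, hsplit]
  calc ‖proj0 a + proj0 (z - a)‖ ≤ ‖proj0 a‖ + ‖proj0 (z - a)‖ := norm_add_le _ _
    _ ≤ ‖proj0 a‖ + ‖z - a‖ := by linarith [norm_proj0_le (z - a)]
    _ = ‖proj0 a‖ + dist z a := by rw [dist_eq_norm]

lemma abs_coord_sub_le_dist {n : ℕ} [NeZero n] (z a : EuclideanSpace ℝ (Fin n)) (i : Fin n) :
    |z i - a i| ≤ dist z a := by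
  rw [EuclideanSpace.dist_eq, ← Real.dist_eq]
  have h1 : dist (z i) (a i) ^ 2 ≤ ∑ k, dist (z k) (a k) ^ 2 :=
    Finset.single_le_sum (f := fun k => dist (z k) (a k) ^ 2)
      (fun k _ => sq_nonneg _) (Finset.mem_univ i)
  calc dist (z i) (a i) = Real.sqrt (dist (z i) (a i) ^ 2) := (Real.sqrt_sq dist_nonneg).symm
    _ ≤ _ := Real.sqrt_le_sqrt h1

lemma radial_nonneg {n : ℕ} [NeZero n] (z : EuclideanSpace ℝ (Fin n)) : 0 ≤ radial z :=
  Real.sqrt_nonneg _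


lemma radial_single0 {n : ℕ} [NeZero n] (c : ℝ) :
    radial (show EuclideanSpace ℝ (Fin n) from WithLp.toLp 2 (fun i => if i = 0 then c else 0)) = 0 := by
  rw [radial]
  have : ∑ i ∈ Finset.univ.erase (0 : Fin n),
      ((fun i => if i = (0 : Fin n) then c else 0) i) ^ 2 = 0 := by
    apply Finset.sum_eq_zero
    intro i hi
    have : i ≠ 0 := (Finset.mem_erase.mp hi).1
    simp [this]
  rw [this, Real.sqrt_zero]

lemma zero_mem_frontier_cuspDomain (n : ℕ) [NeZero n] (α : ℝ) :
    (0 : EuclideanSpace ℝ (Fin n)) ∈ frontier (cuspDomain n α) := by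
  constructor
  · -- in closure
    rw [Metric.mem_closure_iff]
    intro ε hε
    set c : ℝ := min (ε/2) (1/2) with hc
    have hc0 : 0 < c := by positivity
    have hc1 : c < 1 := lt_of_le_of_lt (min_le_right _ _) (by norm_num)
    refine ⟨(WithLp.toLp 2 (fun i => if i = 0 then c else 0) : EuclideanSpace ℝ (Fin n)), ?_, ?_⟩
    · refine ⟨by simpa using hc0, by simpa using hc1, ?_⟩
      rw [radial_single0]
      have : (0:ℝ) < c ^ α := Real.rpow_pos_of_pos hc0 α
      simpa using this
    · rw [EuclideanSpace.dist_eq]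
      have hsum : ∑ i : Fin n, dist ((0 : EuclideanSpace ℝ (Fin n)) i)
          ((WithLp.toLp 2 (fun i => if i = (0:Fin n) then c else 0) : EuclideanSpace ℝ (Fin n)) i) ^ 2 = c ^ 2 := by
        rw [Finset.sum_eq_single_of_mem (0 : Fin n) (Finset.mem_univ _)]
        · simp [Real.dist_eq, abs_of_pos hc0]
        · intro i _ hi
          simp [hi]
      rw [hsum, Real.sqrt_sq hc0.le]
      calc c ≤ ε/2 := min_le_left _ _
        _ < ε := by linarith
  · -- not in interior
    intro h
    have h2 := interior_subset h
    have : (0:ℝ) < (0 : EuclideanSpace ℝ (Fin n)) 0 := h2.1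
    simp at this

lemma cuspCell_nonempty (n : ℕ) [NeZero n] (hn : 2 ≤ n) (α : ℝ) (j m : ℕ) (hm : 1 ≤ m) :
    (cuspCell n α j m).Nonempty := by
  set ℓ := Nat.log 2 m + 1 with hℓ
  set x0 : ℝ := (m:ℝ)/2^(j+ℓ) with hx0
  have hx0pos : 0 < x0 := by
    apply div_pos (by exact_mod_cast hm) (by positivity)
  set r0 : ℝ := (1 - 1/2^ℓ) * x0 ^ α with hr0
  have h2ℓ : (1:ℝ)/2^ℓ ≤ 1 := by
    rw [div_le_one (by positivity)]
    exact one_le_pow₀ (by norm_num)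
  have hr0nonneg : 0 ≤ r0 := by
    apply mul_nonneg (by linarith) (Real.rpow_nonneg hx0pos.le α)
  have hone : (1 : Fin n) ≠ 0 := by
    have : ((1 : Fin n) : ℕ) = 1 % n := rfl
    have h1n : (1:ℕ) % n = 1 := Nat.mod_eq_of_lt (by omega)
    intro h
    have := congrArg (Fin.val) h
    simp [this] at *
    omega
  refine ⟨(WithLp.toLp 2 (fun i => if i = 0 then x0 else if i = 1 then r0 else 0) :
    EuclideanSpace ℝ (Fin n)), ?_⟩
  have hco : (WithLp.toLp 2 (fun i => if i = (0:Fin n) then x0 else if i = 1 then r0 else 0) : EuclideanSpace ℝ (Fin n)) 0 = x0 := by simp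
  have hrad : radial (show EuclideanSpace ℝ (Fin n) from
      WithLp.toLp 2 (fun i => if i = 0 then x0 else if i = 1 then r0 else 0)) = r0 := by
    rw [radial]
    have hsum : ∑ i ∈ Finset.univ.erase (0 : Fin n),
        ((fun i => if i = (0:Fin n) then x0 else if i = 1 then r0 else 0) i) ^ 2 = r0 ^ 2 := by
      rw [Finset.sum_eq_single_of_mem (1 : Fin n)
        (Finset.mem_erase.mpr ⟨hone, Finset.mem_univ _⟩)]
      · simp [hone]
      · intro i _ hi1
        have hi0 : i ≠ 0 := (Finset.mem_erase.mp ‹_›).1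
        simp [hi0, hi1]
    rw [hsum, Real.sqrt_sq hr0nonneg]
  refine ⟨by rw [hco], ?_, ?_, ?_⟩
  · rw [hco]
    apply div_le_div_of_nonneg_right ?_ (by positivity)
    · push_cast; linarith
  · rw [hrad, hco]
    have : (1:ℝ)/2^ℓ ≤ 1/2^(ℓ-1) := by
      apply div_le_div_of_nonneg_left one_pos.le (by positivity)
      exact pow_le_pow_right₀ (by norm_num) (by omega)
    apply mul_le_mul_of_nonneg_right (by linarith) (Real.rpow_nonneg hx0pos.le α)
  · rw [hrad, hco]

/-- Lower bound `δ(S_{j,m}) ≥ C(α)·2^{−(αj+ℓ)}` for the distance from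
`S_{j,m}` to the boundary of the cusp `Ω_α`, where `ℓ = ⌊log₂ m⌋ + 1`. -/
theorem cuspCell_dist_to_boundary (n : ℕ) [NeZero n] (hn : 2 ≤ n) (α : ℝ) (hα : 1 < α) :
    ∃ C : ℝ, 0 < C ∧ ∀ j m : ℕ, 1 ≤ j → 1 ≤ m →
      C * (2 : ℝ) ^ (-(α * j + (Nat.log 2 m + 1 : ℕ))) ≤
        setDist (cuspCell n α j m) (frontier (cuspDomain n α)) := by
  have h2pos : (0:ℝ) < 2 := two_pos
  set Cc : ℝ := (2:ℝ) ^ (-α) / (2 * (α + 1)) with hCc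
  have hCpos : 0 < Cc := div_pos (Real.rpow_pos_of_pos h2pos _) (by linarith)
  have hCnum : (2:ℝ) ^ (-α) < 1 / 2 := by
    have h1 : (2:ℝ) ^ (-α) < (2:ℝ) ^ (-(1:ℝ)) :=
      (Real.rpow_lt_rpow_left_iff one_lt_two).mpr (by linarith)
    rwa [show ((2:ℝ) ^ (-(1:ℝ))) = 1/2 by
      rw [Real.rpow_neg h2pos.le, Real.rpow_one]; norm_num] at h1
  have hClt : Cc < 1 / 8 := by
    rw [hCc, div_lt_iff₀ (by linarith)]
    nlinarith [Real.rpow_pos_of_pos h2pos (-α)]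
  refine ⟨Cc, hCpos, ?_⟩
  intro j m hj hm
  set L := Nat.log 2 m with hLdef
  -- the quantity ε := Cc * 2^(-(αj + L + 1))
  set E : ℝ := (2:ℝ) ^ (-(α * j + ((L + 1 : ℕ) : ℝ))) with hE
  set ε : ℝ := Cc * E with hε
  have hEpos : 0 < E := Real.rpow_pos_of_pos h2pos _
  have hεpos : 0 < ε := mul_pos hCpos hEpos
  -- basic powers-of-two identities
  have hpow_nat : ∀ k : ℕ, (2:ℝ) ^ (-(k:ℝ)) = 1 / 2 ^ k := by
    intro k
    rw [Real.rpow_neg h2pos.le, Real.rpow_natCast, one_div]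
  have hEeq : E = (2:ℝ) ^ (-(α * j)) * (1 / 2 ^ (L + 1)) := by
    rw [hE, show -(α * (j:ℝ) + ((L + 1 : ℕ) : ℝ)) = (-(α*(j:ℝ))) + (-(((L+1:ℕ)):ℝ)) by ring,
      Real.rpow_add h2pos, hpow_nat]
  have haj : (2:ℝ) ^ (-(α * j)) ≤ 1 / 2 ^ j := by
    have h1 : (2:ℝ) ^ (-(α * j)) ≤ (2:ℝ) ^ (-(j:ℝ)) := by
      apply Real.rpow_le_rpow_of_exponent_le one_le_two
      have : (j:ℝ) ≤ α * j := by nlinarith [Nat.cast_nonneg (α := ℝ) j]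
      linarith
    rw [hpow_nat] at h1
    exact h1
  -- bound: E ≤ 1/2^(j+1), hence ε < small
  have hEle : E ≤ (1 / 2 ^ (j+1)) := by
    rw [hE, ← hpow_nat]
    apply Real.rpow_le_rpow_of_exponent_le one_le_two
    have h1 : ((j:ℝ)) ≤ α * j := by nlinarith [Nat.cast_nonneg (α := ℝ) j]
    have h2 : (1:ℝ) ≤ ((L+1:ℕ):ℝ) := by exact_mod_cast Nat.one_le_iff_ne_zero.mpr (by omega)
    push_cast
    push_cast at h2
    linarith
  -- prove ε ≤ d for every admissible distance d
  apply le_csInf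
  · obtain ⟨a, ha⟩ := cuspCell_nonempty n hn α j m hm
    exact ⟨dist a 0, a, ha, 0, zero_mem_frontier_cuspDomain n α, rfl⟩
  rintro d ⟨a, haS, b, hbF, rfl⟩
  -- unpack cell membership
  obtain ⟨h1, h2, h3, h4⟩ := haS
  set x : ℝ := a 0 with hx
  -- m-range facts
  have hmL : (2:ℝ)^L ≤ (m:ℝ) := by exact_mod_cast Nat.pow_log_le_self 2 (by omega)
  have hmU : (m:ℝ) + 1 ≤ 2^(L+1) := by
    have := Nat.lt_pow_succ_log_self (b := 2) (by norm_num) m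
    exact_mod_cast Nat.succ_le_of_lt this
  have hxlb : 1 / 2^(j+1) ≤ x := by
    refine le_trans ?_ h1
    rw [div_le_div_iff₀ (by positivity) (by positivity)]
    have : (2:ℝ) ^ (j + (L+1)) = 2 ^ (j+1) * 2 ^ L := by
      rw [show j + (L+1) = (j+1) + L by omega, pow_add]
    rw [one_mul, this]
    calc (2:ℝ) ^ (j+1) * 2 ^ L ≤ 2 ^ (j+1) * m := by
          apply mul_le_mul_of_nonneg_left hmL (by positivity)
      _ = (m:ℝ) * 2 ^ (j+1) := by ring
  have hxub : x ≤ 1 / 2^j := by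
    refine le_trans h2 ?_
    rw [div_le_div_iff₀ (by positivity) (by positivity)]
    have : (2:ℝ) ^ (j + (L+1)) = 2 ^ j * 2 ^ (L+1) := by rw [pow_add]
    rw [this, one_mul]
    calc ((m:ℝ)+1) * 2 ^ j ≤ 2^(L+1) * 2 ^ j := by
          apply mul_le_mul_of_nonneg_right hmU (by positivity)
      _ = (2:ℝ)^j * 2^(L+1) := by ring
  have hxpos : 0 < x := lt_of_lt_of_le (by positivity) hxlb
  have hj2 : (2:ℝ) ≤ 2 ^ j := by
    calc (2:ℝ) = 2^1 := (pow_one 2).symm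
      _ ≤ 2^j := pow_le_pow_right₀ one_le_two hj
  have hxhalf : x ≤ 1/2 := by
    refine le_trans hxub ?_
    rw [div_le_div_iff₀ (by positivity) (by norm_num)]
    linarith
  -- ε < x
  have hεx : ε < x := by
    have h1' : ε ≤ Cc * (1 / 2^(j+1)) := by
      apply mul_le_mul_of_nonneg_left hEle hCpos.le
    have h2' : Cc * (1 / 2^(j+1)) < 1 * (1 / 2^(j+1)) := by
      apply mul_lt_mul_of_pos_right (by linarith) (by positivity)
    rw [one_mul] at h2'
    linarith
  -- lower bound on x^α
  have hxalb : (2:ℝ) ^ (-α) * (2:ℝ) ^ (-(α * j)) ≤ x ^ α := by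
    have e1 : ((1:ℝ)/2^(j+1)) = (2:ℝ)^(-(((j+1:ℕ)):ℝ)) := (hpow_nat (j+1)).symm
    have e2 : ((1:ℝ)/2^(j+1)) ^ α ≤ x ^ α :=
      Real.rpow_le_rpow (by positivity) hxlb (by linarith)
    rw [e1, ← Real.rpow_mul h2pos.le] at e2
    have e3 : -(((j+1:ℕ)):ℝ) * α = (-α) + (-(α * (j:ℝ))) := by push_cast; ring
    rw [e3, Real.rpow_add h2pos] at e2
    exact e2
  -- the key estimate : (α+1) * ε ≤ (1/2^(L+1)) * x^α
  have hkey : (α + 1) * ε ≤ (1 / 2^(L+1)) * x ^ α := by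
    have hCeq : (α + 1) * Cc = (2:ℝ)^(-α) / 2 := by
      rw [hCc]; field_simp
    have : (α + 1) * ε = ((2:ℝ)^(-α) * (2:ℝ)^(-(α * j))) * (1 / 2^(L+1)) / 2 := by
      rw [hε, hEeq, ← mul_assoc, hCeq]; ring
    rw [this]
    have hxa0 : 0 ≤ x ^ α := Real.rpow_nonneg hxpos.le α
    have hp : (0:ℝ) < 1 / 2^(L+1) := by positivity
    nlinarith
  -- suppose dist a b < ε and derive a contradiction
  by_contra hcon
  push_neg at hcon
  have hball : Metric.ball a ε ⊆ cuspDomain n α := by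
    intro z hz
    rw [Metric.mem_ball] at hz
    have hz0 : |z 0 - x| < ε := lt_of_le_of_lt (abs_coord_sub_le_dist z a 0) hz
    rw [abs_lt] at hz0
    have hz0lb : x - ε < z 0 := by linarith
    have hz0pos : 0 < z 0 := by linarith
    refine ⟨hz0pos, ?_, ?_⟩
    · -- z 0 < 1
      have : z 0 < x + ε := by linarith
      have : z 0 < 2 * x := by linarith
      linarith
    · -- radial bound
      have hrz : radial z < radial a + ε := by
        have := radial_le_radial_add_dist z a
        linarith
      have hxε0 : 0 ≤ x - ε := by linarith
      have hstep1 : (x - ε) ^ α ≤ (z 0) ^ α :=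
        Real.rpow_le_rpow hxε0 (by linarith) (by linarith)
      -- Bernoulli: x^α - α ε ≤ (x-ε)^α
      have hstep2 : x ^ α - α * ε ≤ (x - ε) ^ α := by
        have ht : -1 ≤ -(ε/x) := by
          rw [neg_le_neg_iff, div_le_one hxpos]
          linarith
        have hB := one_add_mul_self_le_rpow_one_add ht hα.le
        have hre : (1 + -(ε/x)) = (x - ε)/x := by field_simp; ring
        rw [hre, Real.div_rpow hxε0 hxpos.le] at hB
        -- hB : 1 + α * -(ε/x) ≤ (x-ε)^α / x^α
        have hxapos : 0 < x ^ α := Real.rpow_pos_of_pos hxpos α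
        rw [le_div_iff₀ hxapos] at hB
        -- (1 - α ε / x) * x^α ≤ (x-ε)^α
        have hxm1 : x ^ (α - 1) ≤ 1 := Real.rpow_le_one hxpos.le (by linarith) (by linarith)
        have hxdiv : x ^ α / x = x ^ (α - 1) := by
          rw [Real.rpow_sub hxpos, Real.rpow_one]
        have hexp : (1 + α * -(ε/x)) * x ^ α = x ^ α - α * ε * (x ^ α / x) := by
          field_simp; ring
        rw [hexp, hxdiv] at hB
        have : α * ε * x ^ (α - 1) ≤ α * ε := by
          have hαε : 0 ≤ α * ε := by positivity
          nlinarith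
        linarith
      -- combine
      have hcomb : (1 - 1/2^(L+1)) * x ^ α + ε ≤ x ^ α - α * ε := by nlinarith
      calc radial z < radial a + ε := hrz
        _ ≤ (1 - 1/2^(L+1)) * x ^ α + ε := by linarith [h4]
        _ ≤ x ^ α - α * ε := hcomb
        _ ≤ (x - ε) ^ α := hstep2
        _ ≤ (z 0) ^ α := hstep1
  have hbint : b ∈ interior (cuspDomain n α) := by
    have : Metric.ball a ε ⊆ interior (cuspDomain n α) :=
      interior_maximal hball Metric.isOpen_ball
    apply this
    rw [Metric.mem_ball, dist_comm]
    exact hcon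
  exact hbF.2 hbint
end

section
/- Let n ≥ 2 and α > 1. There exists a constant C(α, n) such that for all integers j, m ≥ 1, with ℓ = ⌊log₂ m⌋ + 1, the n-dimensional Lebesgue measure of S_{j,m} satisfies |S_{j,m}| ≤ C(α, n) · 2^{−j(α(n−1)+1)} · 2^{−2ℓ}. -/
open MeasureTheory Metric Set
open scoped ENNReal

set_option maxHeartbeats 1600000

lemma aux_pow_sub_pow_le {x y : ℝ} (hx : 0 ≤ x) (hxy : x ≤ y) (d : ℕ) :
    y ^ d - x ^ d ≤ d * y ^ (d - 1) * (y - x) := by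
  have hy : 0 ≤ y := hx.trans hxy
  induction d with
  | zero => simp
  | succ k IH =>
    rcases Nat.eq_zero_or_pos k with rfl | hk
    · simp
    obtain ⟨k', rfl⟩ : ∃ k', k = k' + 1 := ⟨k - 1, by omega⟩
    simp only [Nat.add_sub_cancel] at IH ⊢
    have hpow : x ^ (k' + 1) ≤ y ^ (k' + 1) := pow_le_pow_left₀ hx hxy _
    have h1 : y * (y ^ (k' + 1) - x ^ (k' + 1)) ≤ y * (((k' + 1 : ℕ) : ℝ) * y ^ k' * (y - x)) :=
      mul_le_mul_of_nonneg_left IH hy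
    have h2 : (y - x) * x ^ (k' + 1) ≤ (y - x) * y ^ (k' + 1) :=
      mul_le_mul_of_nonneg_left hpow (sub_nonneg.2 hxy)
    calc y ^ (k' + 1 + 1) - x ^ (k' + 1 + 1)
        = y * (y ^ (k' + 1) - x ^ (k' + 1)) + (y - x) * x ^ (k' + 1) := by ring
      _ ≤ y * (((k' + 1 : ℕ) : ℝ) * y ^ k' * (y - x)) + (y - x) * y ^ (k' + 1) :=
          add_le_add h1 h2
      _ = ((k' + 1 + 1 : ℕ) : ℝ) * y ^ (k' + 1) * (y - x) := by push_cast; ring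

/-- Measure bound `|S_{j,m}| ≤ C(α,n)·2^{−j(α(n−1)+1)}·2^{−2ℓ}`,
where `ℓ = ⌊log₂ m⌋ + 1`. -/
theorem cuspCell_measure_bound (n : ℕ) [NeZero n] (hn : 2 ≤ n) (α : ℝ) (hα : 1 < α) :
    ∃ C : ℝ, 0 < C ∧ ∀ j m : ℕ, 1 ≤ j → 1 ≤ m →
      volume (cuspCell n α j m) ≤
        ENNReal.ofReal (C * (2 : ℝ) ^ (-((j : ℝ) * (α * ((n : ℝ) - 1) + 1))) *
          (2 : ℝ) ^ (-(2 * ((Nat.log 2 m + 1 : ℕ) : ℝ)))) := by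
  obtain ⟨d, rfl⟩ : ∃ d, n = d + 1 := ⟨n - 1, by omega⟩
  have hd : 1 ≤ d := by omega
  haveI : Nonempty (Fin d) := ⟨⟨0, hd⟩⟩
  obtain ⟨κ, hκdef⟩ : ∃ κ : ℝ, κ = Real.sqrt Real.pi ^ d / Real.Gamma ((d : ℝ) / 2 + 1) :=
    ⟨_, rfl⟩
  have hκ : 0 < κ := by
    rw [hκdef]
    exact div_pos (pow_pos (Real.sqrt_pos.mpr Real.pi_pos) d)
      (Real.Gamma_pos_of_pos (by positivity))
  have hα0 : (0:ℝ) < α := lt_trans one_pos hα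
  refine ⟨κ * d * (2 * α + 2), by positivity, ?_⟩
  intro j m hj hm
  set ℓ : ℕ := Nat.log 2 m + 1 with hℓdef
  obtain ⟨a, ha_def⟩ : ∃ a : ℝ, a = (m : ℝ) / 2 ^ (j + ℓ) := ⟨_, rfl⟩
  obtain ⟨b, hb_def⟩ : ∃ b : ℝ, b = ((m : ℝ) + 1) / 2 ^ (j + ℓ) := ⟨_, rfl⟩
  obtain ⟨c1, hc1_def⟩ : ∃ c1 : ℝ, c1 = (1 - 1 / 2 ^ (ℓ - 1)) * a ^ α := ⟨_, rfl⟩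
  obtain ⟨c2, hc2_def⟩ : ∃ c2 : ℝ, c2 = (1 - 1 / 2 ^ ℓ) * b ^ α := ⟨_, rfl⟩
  obtain ⟨t, ht_def⟩ : ∃ t : ℝ, t = (2 : ℝ) ^ (-(j : ℝ)) := ⟨_, rfl⟩
  obtain ⟨s, hs_def⟩ : ∃ s : ℝ, s = (2 : ℝ) ^ (-(ℓ : ℝ)) := ⟨_, rfl⟩
  have hP : (0:ℝ) < 2 ^ (j + ℓ) := by positivity
  have h2j : (0:ℝ) < 2 ^ j := by positivity
  have hm1 : (1:ℝ) ≤ (m:ℝ) := by exact_mod_cast hm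
  have ha0 : 0 < a := by rw [ha_def]; positivity
  have hab : a ≤ b := by rw [ha_def, hb_def]; gcongr; linarith
  have hb0 : 0 < b := lt_of_lt_of_le ha0 hab
  have hℓ1 : 1 ≤ ℓ := Nat.le_add_left 1 _
  have h2ℓ : (2:ℝ) ^ ℓ = 2 * 2 ^ (ℓ - 1) := by
    have e : ℓ - 1 + 1 = ℓ := by omega
    conv_lhs => rw [← e]
    rw [pow_succ']
  have hs_eq : s = 1 / 2 ^ ℓ := by
    rw [hs_def, Real.rpow_neg (by norm_num), Real.rpow_natCast, one_div]
  have ht_eq : t = 1 / 2 ^ j := by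
    rw [ht_def, Real.rpow_neg (by norm_num), Real.rpow_natCast, one_div]
  have hs0 : 0 < s := by rw [hs_eq]; positivity
  have ht0 : 0 < t := by rw [ht_eq]; positivity
  have hone_le : (1:ℝ) ≤ 2 ^ (ℓ - 1) := one_le_pow₀ (by norm_num)
  have hs_half : s ≤ 1 / 2 := by
    rw [hs_eq, h2ℓ]
    rw [div_le_div_iff₀ (by positivity) (by norm_num)]
    linarith
  have hmlow : (2:ℝ) ^ (ℓ - 1) ≤ (m : ℝ) := by
    have h0 := Nat.pow_log_le_self 2 (by omega : m ≠ 0)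
    have h' : (ℓ - 1 : ℕ) = Nat.log 2 m := by omega
    rw [h']
    exact_mod_cast h0
  have hmhigh : (m : ℝ) + 1 ≤ 2 ^ ℓ := by
    have h0 : (m + 1 : ℕ) ≤ 2 ^ ℓ := Nat.lt_pow_succ_log_self (by norm_num : 1 < 2) m
    exact_mod_cast h0
  have hpowadd : (2:ℝ) ^ (j + ℓ) = 2 ^ j * 2 ^ ℓ := pow_add 2 j ℓ
  have hba_sub : b - a = t * s := by
    rw [hb_def, ha_def, ht_eq, hs_eq, div_sub_div_same, hpowadd]
    ring
  have hbt : b ≤ t := by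
    rw [hb_def, ht_eq, div_le_div_iff₀ hP h2j, hpowadd]
    calc ((m:ℝ) + 1) * 2 ^ j ≤ 2 ^ ℓ * 2 ^ j := mul_le_mul_of_nonneg_right hmhigh h2j.le
      _ = 1 * (2 ^ j * 2 ^ ℓ) := by ring
  have hta : t ≤ 2 * a := by
    rw [ht_eq, ha_def, mul_div_assoc']
    rw [div_le_div_iff₀ h2j hP, hpowadd, h2ℓ]
    have h := mul_le_mul_of_nonneg_right hmlow h2j.le
    linarith
  -- rpow facts
  have haαbα : a ^ α ≤ b ^ α := Real.rpow_le_rpow ha0.le hab hα0.le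
  have hbα0 : (0:ℝ) < b ^ α := Real.rpow_pos_of_pos hb0 α
  have haα0 : (0:ℝ) < a ^ α := Real.rpow_pos_of_pos ha0 α
  have hbαtα : b ^ α ≤ t ^ α := Real.rpow_le_rpow hb0.le hbt hα0.le
  have htα0 : (0:ℝ) < t ^ α := Real.rpow_pos_of_pos ht0 α
  -- Bernoulli: b^α - a^α ≤ 2 α s b^α
  have hpow_diff : b ^ α - a ^ α ≤ 2 * α * s * b ^ α := by
    obtain ⟨u, hu_def⟩ : ∃ u : ℝ, u = a / b := ⟨_, rfl⟩
    have hu0 : 0 < u := by rw [hu_def]; exact div_pos ha0 hb0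
    have hu1 : u ≤ 1 := by rw [hu_def]; exact (div_le_one hb0).2 hab
    have hbern : 1 + α * (u - 1) ≤ u ^ α := by
      have h := one_add_mul_self_le_rpow_one_add (s := u - 1) (by linarith) hα.le
      simpa using h
    have haub : a = u * b := by rw [hu_def]; field_simp
    have haα : a ^ α = u ^ α * b ^ α := by
      rw [haub, Real.mul_rpow hu0.le hb0.le]
    have h1u : 1 - u = (t * s) / b := by
      rw [hu_def, ← hba_sub]
      field_simp
    have h1u2 : 1 - u ≤ 2 * s := by
      rw [h1u, div_le_iff₀ hb0]
      calc t * s = s * t := by ring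
        _ ≤ s * (2 * b) := mul_le_mul_of_nonneg_left (by linarith) hs0.le
        _ = 2 * s * b := by ring
    calc b ^ α - a ^ α = b ^ α * (1 - u ^ α) := by rw [haα]; ring
      _ ≤ b ^ α * (α * (1 - u)) := by
          apply mul_le_mul_of_nonneg_left _ hbα0.le
          linarith
      _ ≤ b ^ α * (α * (2 * s)) := by
          apply mul_le_mul_of_nonneg_left _ hbα0.le
          apply mul_le_mul_of_nonneg_left h1u2 hα0.le
      _ = 2 * α * s * b ^ α := by ring
  have hsℓeq : (1:ℝ) / 2 ^ ℓ = s := hs_eq.symm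
  have hsℓ1eq : (1:ℝ) / 2 ^ (ℓ - 1) = 2 * s := by
    rw [hs_eq, h2ℓ]
    field_simp
  have hc1_0 : 0 ≤ c1 := by
    rw [hc1_def, hsℓ1eq]
    have h1 : (0:ℝ) ≤ 1 - 2 * s := by linarith
    exact mul_nonneg h1 haα0.le
  have hc2c1 : c2 - c1 ≤ (2 * α + 2) * s * b ^ α := by
    rw [hc1_def, hc2_def, hsℓ1eq, hsℓeq]
    have e1 : s * a ^ α ≤ s * b ^ α := mul_le_mul_of_nonneg_left haαbα hs0.le
    have e2 : 0 ≤ s * b ^ α := le_trans (mul_nonneg hs0.le haα0.le) e1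
    nlinarith [hpow_diff]
  have hc12 : c1 ≤ c2 := by
    rw [hc1_def, hc2_def, hsℓ1eq, hsℓeq]
    have h1 : (0:ℝ) ≤ 1 - 2 * s := by linarith
    exact le_trans (mul_le_mul_of_nonneg_left haαbα h1)
      (mul_le_mul_of_nonneg_right (by linarith) hbα0.le)
  have hc2_0 : 0 ≤ c2 := hc1_0.trans hc12
  have hc2t : c2 ≤ t ^ α := by
    rw [hc2_def, hsℓeq]
    calc (1 - s) * b ^ α ≤ 1 * b ^ α := mul_le_mul_of_nonneg_right (by linarith) hbα0.le
      _ = b ^ α := one_mul _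
      _ ≤ t ^ α := hbαtα
  -- bound on the difference of d-th powers
  have hdpow : c2 ^ d - c1 ^ d ≤ (d : ℝ) * (2 * α + 2) * s * (t ^ α) ^ d := by
    have h1 := aux_pow_sub_pow_le hc1_0 hc12 d
    have h2 : c2 ^ (d - 1) ≤ (t ^ α) ^ (d - 1) := pow_le_pow_left₀ hc2_0 hc2t _
    have h3 : (d : ℝ) * c2 ^ (d - 1) * (c2 - c1) ≤
        (d : ℝ) * (t ^ α) ^ (d - 1) * ((2 * α + 2) * s * b ^ α) := by
      apply mul_le_mul
      · exact mul_le_mul_of_nonneg_left h2 (by positivity)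
      · exact hc2c1
      · linarith
      · positivity
    have h4 : (d : ℝ) * (t ^ α) ^ (d - 1) * ((2 * α + 2) * s * b ^ α) ≤
        (d : ℝ) * (t ^ α) ^ (d - 1) * ((2 * α + 2) * s * t ^ α) := by
      apply mul_le_mul_of_nonneg_left _ (by positivity)
      apply mul_le_mul_of_nonneg_left hbαtα (by positivity)
    have h6 : (t ^ α) ^ (d - 1) * t ^ α = (t ^ α) ^ d := by
      rw [← pow_succ]
      congr 1
      omega
    have h5 : (d : ℝ) * (t ^ α) ^ (d - 1) * ((2 * α + 2) * s * t ^ α) =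
        (d : ℝ) * (2 * α + 2) * s * (t ^ α) ^ d := by
      calc (d : ℝ) * (t ^ α) ^ (d - 1) * ((2 * α + 2) * s * t ^ α)
          = (d : ℝ) * (2 * α + 2) * s * ((t ^ α) ^ (d - 1) * t ^ α) := by ring
        _ = (d : ℝ) * (2 * α + 2) * s * (t ^ α) ^ d := by rw [h6]
    linarith
  -- the containing product set
  obtain ⟨A, hA_def⟩ : ∃ A : Set (Fin d → ℝ),
      A = (fun y => Real.sqrt (∑ i, y i ^ 2)) ⁻¹' Icc c1 c2 := ⟨_, rfl⟩
  obtain ⟨T, hT_def⟩ : ∃ T : Set (ℝ × (Fin d → ℝ)), T = Icc a b ×ˢ A := ⟨_, rfl⟩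
  have hgmeas : Measurable (fun y : Fin d → ℝ => Real.sqrt (∑ i, y i ^ 2)) := by
    apply Continuous.measurable
    exact Real.continuous_sqrt.comp (continuous_finset_sum _ fun i _ => (continuous_apply i).pow 2)
  have hAmeas : MeasurableSet A := by rw [hA_def]; exact hgmeas measurableSet_Icc
  have hTmeas : MeasurableSet T := by rw [hT_def]; exact measurableSet_Icc.prod hAmeas
  -- radial rewritten as a sum over Fin d
  have hrad : ∀ z : EuclideanSpace ℝ (Fin (d+1)),
      radial z = Real.sqrt (∑ i : Fin d, z i.succ ^ 2) := by
    intro z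
    unfold radial
    congr 1
    have h2 := Finset.add_sum_erase Finset.univ (fun i => z i ^ 2) (Finset.mem_univ (0 : Fin (d+1)))
    simp only [Fin.sum_univ_succ] at h2
    exact add_left_cancel h2
  -- containment
  have hsub : cuspCell (d+1) α j m ⊆
      ((MeasurableEquiv.toLp 2 (Fin (d+1) → ℝ)).symm) ⁻¹'
        ((MeasurableEquiv.piFinSuccAbove (fun _ : Fin (d+1) => ℝ) 0) ⁻¹' T) := by
    intro z hz
    simp only [cuspCell, Set.mem_setOf_eq] at hz
    rw [← hℓdef, ← ha_def] at hz
    obtain ⟨hz1, hz2, hz3, hz4⟩ := hz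
    have hz2' : z 0 ≤ b := by rw [hb_def]; push_cast at hz2 ⊢; exact hz2
    have hz00 : 0 < z 0 := lt_of_lt_of_le ha0 hz1
    have hcoef1 : (0:ℝ) ≤ 1 - 1 / 2 ^ (ℓ - 1) := by rw [hsℓ1eq]; linarith
    have hcoef2 : (0:ℝ) ≤ 1 - 1 / 2 ^ ℓ := by rw [hsℓeq]; linarith
    have hrz : radial z ∈ Icc c1 c2 := by
      constructor
      · rw [hc1_def]
        refine le_trans ?_ hz3
        exact mul_le_mul_of_nonneg_left (Real.rpow_le_rpow ha0.le hz1 hα0.le) hcoef1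
      · rw [hc2_def]
        refine le_trans hz4 ?_
        exact mul_le_mul_of_nonneg_left (Real.rpow_le_rpow hz00.le hz2' hα0.le) hcoef2
    simp only [Set.mem_preimage, MeasurableEquiv.piFinSuccAbove_apply, hT_def, Set.mem_prod,
      Set.mem_Icc]
    refine ⟨⟨hz1, hz2'⟩, ?_⟩
    show (fun i : Fin d => z i.succ) ∈ A
    rw [hA_def]
    show Real.sqrt (∑ i : Fin d, z i.succ ^ 2) ∈ Icc c1 c2
    rw [← hrad z]
    exact hrz
  -- measure of the preimage
  have hmeas_eq : volume (((MeasurableEquiv.toLp 2 (Fin (d+1) → ℝ)).symm) ⁻¹'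
      ((MeasurableEquiv.piFinSuccAbove (fun _ : Fin (d+1) => ℝ) 0) ⁻¹' T)) =
      volume (Icc a b) * volume A := by
    rw [← Set.preimage_comp]
    rw [((MeasureTheory.volume_preserving_piFinSuccAbove (fun _ : Fin (d+1) => ℝ) 0).comp
      (EuclideanSpace.volume_preserving_symm_measurableEquiv_toLp (Fin (d+1)))).measure_preimage
      hTmeas.nullMeasurableSet]
    rw [hT_def, Measure.volume_eq_prod, Measure.prod_prod]
  -- volume of A
  have hAvol : volume A ≤ ENNReal.ofReal ((c2 ^ d - c1 ^ d) * κ) := by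
    have hpre : A ⊆ ((MeasurableEquiv.toLp 2 (Fin d → ℝ)).symm).symm ⁻¹'
        (closedBall (0 : EuclideanSpace ℝ (Fin d)) c2 \ ball 0 c1) := by
      rw [hA_def]
      intro y hy
      obtain ⟨hy1, hy2⟩ := hy
      have hnorm : ‖((MeasurableEquiv.toLp 2 (Fin d → ℝ)).symm).symm y‖
          = Real.sqrt (∑ i, y i ^ 2) := by
        rw [EuclideanSpace.norm_eq]
        simp only [Real.norm_eq_abs, sq_abs]
        rfl
      simp only [Set.mem_preimage, Set.mem_diff, Metric.mem_closedBall, Metric.mem_ball,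
        dist_zero_right, hnorm]
      exact ⟨hy2, not_lt.2 hy1⟩
    have hballsub : ball (0 : EuclideanSpace ℝ (Fin d)) c1 ⊆ closedBall 0 c2 :=
      Metric.ball_subset_closedBall.trans (Metric.closedBall_subset_closedBall hc12)
    have hdiff : volume (closedBall (0 : EuclideanSpace ℝ (Fin d)) c2 \ ball 0 c1) =
        ENNReal.ofReal ((c2 ^ d - c1 ^ d) * κ) := by
      rw [measure_diff hballsub measurableSet_ball.nullMeasurableSet measure_ball_lt_top.ne,
        EuclideanSpace.volume_closedBall, EuclideanSpace.volume_ball]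
      simp only [Fintype.card_fin]
      rw [← hκdef]
      rw [← ENNReal.ofReal_pow hc2_0, ← ENNReal.ofReal_pow hc1_0,
        ← ENNReal.sub_mul (fun _ _ => ENNReal.ofReal_ne_top),
        ← ENNReal.ofReal_sub _ (pow_nonneg hc1_0 d), ← ENNReal.ofReal_mul
          (by nlinarith [pow_le_pow_left₀ hc1_0 hc12 d] : (0:ℝ) ≤ c2 ^ d - c1 ^ d)]
    calc volume A ≤ volume (((MeasurableEquiv.toLp 2 (Fin d → ℝ)).symm).symm ⁻¹'
          (closedBall (0 : EuclideanSpace ℝ (Fin d)) c2 \ ball 0 c1)) := measure_mono hpre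
      _ = volume (closedBall (0 : EuclideanSpace ℝ (Fin d)) c2 \ ball 0 c1) :=
          ((EuclideanSpace.volume_preserving_symm_measurableEquiv_toLp (Fin d)).symm).measure_preimage
            ((measurableSet_closedBall.diff measurableSet_ball).nullMeasurableSet)
      _ = ENNReal.ofReal ((c2 ^ d - c1 ^ d) * κ) := hdiff
  -- rpow bookkeeping
  have key : ∀ p : ℝ, ((2:ℝ) ^ p) ^ d = (2:ℝ) ^ (p * (d:ℝ)) := by
    intro p
    rw [← Real.rpow_natCast ((2:ℝ) ^ p) d, ← Real.rpow_mul (by norm_num : (0:ℝ) ≤ 2)]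
  have key2 : ∀ p q : ℝ, (2:ℝ) ^ p * (2:ℝ) ^ q = (2:ℝ) ^ (p + q) := fun p q =>
    (Real.rpow_add two_pos p q).symm
  have key3 : ∀ p q : ℝ, ((2:ℝ) ^ p) ^ q = (2:ℝ) ^ (p * q) := fun p q =>
    (Real.rpow_mul (by norm_num) p q).symm
  have hE : t * (t ^ α) ^ d * (s * s) =
      (2:ℝ) ^ (-((j : ℝ) * (α * (((d:ℝ) + 1) - 1) + 1))) * (2:ℝ) ^ (-(2 * (ℓ : ℝ))) := by
    rw [ht_def, hs_def]
    simp only [key3, key, key2]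
    congr 1
    push_cast
    ring
  -- final real inequality
  have hfinal : (b - a) * ((c2 ^ d - c1 ^ d) * κ) ≤
      κ * (d:ℝ) * (2 * α + 2) * (2:ℝ) ^ (-((j : ℝ) * (α * (((d:ℝ) + 1) - 1) + 1))) *
        (2:ℝ) ^ (-(2 * (ℓ : ℝ))) := by
    calc (b - a) * ((c2 ^ d - c1 ^ d) * κ)
        = (t * s) * ((c2 ^ d - c1 ^ d) * κ) := by rw [hba_sub]
      _ ≤ (t * s) * (((d:ℝ) * (2 * α + 2) * s * (t ^ α) ^ d) * κ) := by
          apply mul_le_mul_of_nonneg_left _ (by positivity)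
          exact mul_le_mul_of_nonneg_right hdpow hκ.le
      _ = (κ * (d:ℝ) * (2 * α + 2)) * (t * (t ^ α) ^ d * (s * s)) := by ring
      _ = _ := by rw [hE]; ring
  -- put everything together
  calc volume (cuspCell (d+1) α j m)
      ≤ volume (((MeasurableEquiv.toLp 2 (Fin (d+1) → ℝ)).symm) ⁻¹'
          ((MeasurableEquiv.piFinSuccAbove (fun _ : Fin (d+1) => ℝ) 0) ⁻¹' T)) :=
        measure_mono hsub
    _ = volume (Icc a b) * volume A := hmeas_eq
    _ ≤ ENNReal.ofReal (b - a) * ENNReal.ofReal ((c2 ^ d - c1 ^ d) * κ) := by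
        rw [Real.volume_Icc]
        exact mul_le_mul_right hAvol _
    _ = ENNReal.ofReal ((b - a) * ((c2 ^ d - c1 ^ d) * κ)) :=
        (ENNReal.ofReal_mul (by linarith)).symm
    _ ≤ ENNReal.ofReal (κ * (d:ℝ) * (2 * α + 2) *
          (2:ℝ) ^ (-((j : ℝ) * (α * ((((d:ℕ) + 1 : ℕ) : ℝ) - 1) + 1))) *
          (2:ℝ) ^ (-(2 * (ℓ : ℝ)))) := by
        apply ENNReal.ofReal_le_ofReal
        convert hfinal using 4
        push_cast
        ring
end
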